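/- arXiv:2409.04879 — 2 statements merged into one kernel-verified Lean document; each statement's English description precedes it below -/
import Mathlib

section
/- Let J ⊆ S be such that W_J is finite, and let c ∈ W be a Coxeter-type element with supp(c) ∩ J = ∅. Set w = w_{0,J}·c and assume ℓ(w) = ℓ(w_{0,J}) + ℓ(c). Then the map sending each z ∈ [e, w] to the unique pair (u, v) with z = uv, u ≤ w_{0,J} and v ≤ c is an order isomorphism from the Bruhat interval [e, w] onto the product poset [e, w_{0,J}] × [e, c]. -/
/-!
Statement 0. Let `(W, S)` be a Coxeter system. Let `J ⊆ S` be such that `W_J` is finite, and let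
`c ∈ W` be a Coxeter-type element with `supp(c) ∩ J = ∅`. Set `w = w_{0,J} * c` and assume
`ℓ(w) = ℓ(w_{0,J}) + ℓ(c)`. Then the map sending each `z ∈ [e, w]` to the unique pair `(u, v)`
with `z = u * v`, `u ≤ w_{0,J}`, `v ≤ c` is an order isomorphism
`[e, w] ≃ [e, w_{0,J}] × [e, c]`.
-/

variable {B W : Type*} [Group W] {M : CoxeterMatrix B}

/-- The Bruhat order on a Coxeter group, via the subword property: `u ≤ w` iff some reduced
word for `w` has a subword whose product is `u`. -/
def CoxeterSystem.bruhatLE (cs : CoxeterSystem M W) (u w : W) : Prop :=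
  ∃ ω : List B, cs.IsReduced ω ∧ cs.wordProd ω = w ∧
    ∃ l : List B, l.Sublist ω ∧ cs.wordProd l = u

/-- The support of `w`: the set of (indices of) simple reflections appearing in some
(equivalently, any) reduced expression of `w`. -/
def CoxeterSystem.support (cs : CoxeterSystem M W) (w : W) : Set B :=
  {i : B | ∃ ω : List B, cs.IsReduced ω ∧ cs.wordProd ω = w ∧ i ∈ ω}

/-- The standard parabolic subgroup `W_J` generated by the simple reflections indexed by `J`. -/
def CoxeterSystem.parabolic (cs : CoxeterSystem M W) (J : Set B) : Subgroup W :=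
  Subgroup.closure (cs.simple '' J)

namespace BruhatAux

open CoxeterSystem List

attribute [local instance] Classical.decEq

variable (cs : CoxeterSystem M W)

local prefix:100 "s" => cs.simple
local prefix:100 "π" => cs.wordProd
local prefix:100 "ℓ" => cs.length
local prefix:100 "ris" => cs.rightInvSeq
local prefix:100 "lis" => cs.leftInvSeq

theorem ris_cons (i : B) (ω : List B) : ris (i :: ω) = ((π ω)⁻¹ * s i * π ω) :: ris ω := rfl

theorem lis_cons (i : B) (ω : List B) :
    lis (i :: ω) = s i :: (lis ω).map (fun x => s i * x * s i) := by
  simp [leftInvSeq, MulAut.conj, cs.inv_simple]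

theorem ris_append (ω₁ ω₂ : List B) :
    ris (ω₁ ++ ω₂) = (ris ω₁).map (fun x => (π ω₂)⁻¹ * x * π ω₂) ++ ris ω₂ := by
  induction ω₁ with
  | nil => simp
  | cons i ω₁ ih =>
    rw [cons_append, ris_cons, ris_cons, ih, map_cons, cons_append]
    congr 1
    rw [cs.wordProd_append, mul_inv_rev]
    group

theorem lis_append (ω₁ ω₂ : List B) :
    lis (ω₁ ++ ω₂) = lis ω₁ ++ (lis ω₂).map (fun x => π ω₁ * x * (π ω₁)⁻¹) := by
  induction ω₁ with
  | nil => simp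
  | cons i ω₁ ih =>
    rw [cons_append, lis_cons, lis_cons, ih, cons_append, map_append, map_map]
    congr 2
    apply List.map_congr_left
    intro x _
    simp only [Function.comp_apply, cs.wordProd_cons, mul_inv_rev, cs.inv_simple]
    group

/-! ### The permutation representation on `W × ZMod 2` -/

/-- The function underlying the action of the simple reflection `i` on `W × ZMod 2`. -/
noncomputable def sigmaFun (i : B) : W × ZMod 2 → W × ZMod 2 :=
  fun p => (s i * p.1 * s i, p.2 + if p.1 = s i then 1 else 0)

theorem sigmaFun_involutive (i : B) : Function.Involutive (sigmaFun cs i) := by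
  intro ⟨t, ε⟩
  have h1 : s i * (s i * t * s i) * s i = t := by
    rw [← mul_assoc, ← mul_assoc, cs.simple_mul_simple_self, one_mul, mul_assoc,
      cs.simple_mul_simple_self, mul_one]
  have h2 : (s i * t * s i = s i) ↔ (t = s i) := by
    constructor
    · intro h
      have := congrArg (fun x => s i * x * s i) h
      simpa [← mul_assoc, cs.simple_mul_simple_self, mul_assoc] using this
    · intro h; rw [h, cs.simple_mul_simple_self, one_mul]
  simp only [sigmaFun, h1, h2]
  refine Prod.ext rfl ?_
  show ε + _ + _ = ε
  by_cases h : t = s i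
  · rw [if_pos h, add_assoc]
    have h12 : (1 : ZMod 2) + 1 = 0 := by decide
    rw [h12, add_zero]
  · rw [if_neg h, add_zero, add_zero]

/-- The action of the simple reflection `i` on `W × ZMod 2`, as a permutation. -/
noncomputable def sigma (i : B) : Equiv.Perm (W × ZMod 2) := (sigmaFun_involutive cs i).toPerm

theorem sigma_apply (i : B) (p : W × ZMod 2) :
    sigma cs i p = (s i * p.1 * s i, p.2 + if p.1 = s i then 1 else 0) := rfl

theorem prod_sigma_apply (ω : List B) (t : W) (ε : ZMod 2) :
    (List.prod (ω.map (sigma cs))) (t, ε)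
      = (π ω * t * (π ω)⁻¹, ε + ((ris ω).count t : ZMod 2)) := by
  induction ω with
  | nil => simp
  | cons i ω ih =>
    rw [map_cons, prod_cons, Equiv.Perm.mul_apply, ih, sigma_apply, ris_cons, count_cons]
    have hiff : ((π ω)⁻¹ * s i * π ω = t) ↔ (π ω * t * (π ω)⁻¹ = s i) := by
      constructor
      · intro h; rw [← h]; group
      · intro h; rw [← h]; group
    refine Prod.ext ?_ ?_
    · simp only [cs.wordProd_cons, mul_inv_rev, cs.inv_simple]
      group
    · simp only []
      rw [Nat.cast_add]
      have : ((if ((π ω)⁻¹ * s i * π ω) == t then 1 else 0 : ℕ) : ZMod 2)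
          = (if π ω * t * (π ω)⁻¹ = s i then 1 else 0) := by
        by_cases h : π ω * t * (π ω)⁻¹ = s i
        · rw [if_pos h, if_pos (beq_iff_eq.mpr (hiff.mpr h))]; norm_num
        · rw [if_neg h, if_neg]
          · norm_num
          · intro hb
            exact h (hiff.mp (beq_iff_eq.mp hb))
      rw [this]
      ring

/-! ### Alternating words -/

theorem alt_split_even (i i' : B) {k : ℕ} (hk : Even k) (m : ℕ) :
    alternatingWord i i' (m + k) = alternatingWord i i' m ++ alternatingWord i i' k := by
  induction m with
  | zero => simp [alternatingWord]
  | succ m ih =>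
    have h1 : m + 1 + k = (m + k) + 1 := by omega
    rw [h1, alternatingWord_succ', ih, alternatingWord_succ']
    have he : Even (m + k) ↔ Even m := by
      simp [Nat.even_add, hk]
    by_cases hm : Even m
    · rw [if_pos (he.mpr hm), if_pos hm, cons_append]
    · rw [if_neg (fun h => hm (he.mp h)), if_neg hm, cons_append]

theorem alt_split_odd (i i' : B) {k : ℕ} (hk : ¬ Even k) (m : ℕ) :
    alternatingWord i i' (m + k) = alternatingWord i' i m ++ alternatingWord i i' k := by
  induction m with
  | zero => simp [alternatingWord]
  | succ m ih =>
    have h1 : m + 1 + k = (m + k) + 1 := by omega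
    rw [h1, alternatingWord_succ', ih, alternatingWord_succ']
    have he : Even (m + k) ↔ ¬ Even m := by
      simp [Nat.even_add, hk]
    by_cases hm : Even m
    · rw [if_neg (fun h => (he.mp h) hm), if_pos hm, cons_append]
    · rw [if_pos (he.mpr hm), if_neg hm, cons_append]

theorem alt_two_mul_succ (i i' : B) (n : ℕ) :
    alternatingWord i i' (2 * (n+1)) = i :: i' :: alternatingWord i i' (2 * n) := by
  have h1 : 2 * (n+1) = (2*n + 1) + 1 := by ring
  have h2 : ¬ Even (2*n + 1) := by rw [Nat.even_iff]; omega
  have h3 : Even (2*n) := by rw [Nat.even_iff]; omega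
  rw [h1, alternatingWord_succ', alternatingWord_succ', if_neg h2, if_pos h3]

theorem prod_map_alt_two_mul {G : Type*} [Monoid G] (f : B → G) (i i' : B) (n : ℕ) :
    List.prod ((alternatingWord i i' (2 * n)).map f) = (f i * f i') ^ n := by
  induction n with
  | zero => simp [alternatingWord]
  | succ n ih =>
    rw [alt_two_mul_succ, map_cons, map_cons, prod_cons, prod_cons, ih, pow_succ']
    rw [mul_assoc]

theorem braid_conj (i i' : B) (hM : M i i' ≠ 0) :
    π (braidWord M i i') * s i' = s (if Even (M i i') then i' else i) * π (braidWord M i i') := by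
  have hn : M i i' = (M i i' - 1) + 1 := by omega
  have h1 : π (alternatingWord i i' (M i i')) = π (alternatingWord i' i (M i i' - 1)) * s i' := by
    nth_rw 1 [hn]
    rw [alternatingWord_succ, wordProd_concat]
  have h2 : π (alternatingWord i' i (M i i' - 1)) = π (alternatingWord i i' (M i i' + 1)) := by
    have hle : M i i' - 1 ≤ M i' i * 2 := by rw [M.symmetric i' i]; omega
    have := cs.prod_alternatingWord_eq_prod_alternatingWord_sub i' i (M i i' - 1) hle
    rw [M.symmetric i' i] at this
    have harith : M i i' * 2 - (M i i' - 1) = M i i' + 1 := by omega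
    rw [harith] at this
    exact this
  have h3 : π (alternatingWord i i' (M i i' + 1))
      = s (if Even (M i i') then i' else i) * π (alternatingWord i i' (M i i')) := by
    rw [alternatingWord_succ', wordProd_cons]
  show π (alternatingWord i i' (M i i')) * s i' = _
  calc π (alternatingWord i i' (M i i')) * s i'
      = π (alternatingWord i' i (M i i' - 1)) * s i' * s i' := by rw [← h1]
    _ = π (alternatingWord i' i (M i i' - 1)) := by
          rw [mul_assoc, cs.simple_mul_simple_self, mul_one]
    _ = s (if Even (M i i') then i' else i) * π (alternatingWord i i' (M i i')) := by
          rw [h2, h3]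

theorem braid_conj' (i i' : B) (hM : M i i' ≠ 0) :
    π (braidWord M i i') * s i = s (if Even (M i i') then i else i') * π (braidWord M i i') := by
  have hb := cs.wordProd_braidWord_eq i i'
  have h := braid_conj cs i' i (by rw [M.symmetric i' i]; exact hM)
  rw [M.symmetric i' i] at h
  rw [hb]
  exact h

theorem p_comm_even (i i' : B) (hM : M i i' ≠ 0) (hev : Even (M i i')) (r : ℕ) :
    π (alternatingWord i i' r) * π (braidWord M i i')
      = π (braidWord M i i') * π (alternatingWord i i' r) := by
  induction r with
  | zero => simp [alternatingWord]
  | succ r ih =>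
    rw [alternatingWord_succ', wordProd_cons, mul_assoc, ih, ← mul_assoc, ← mul_assoc]
    congr 1
    by_cases hr : Even r
    · rw [if_pos hr]
      have := braid_conj cs i i' hM
      rw [if_pos hev] at this
      exact this.symm
    · rw [if_neg hr]
      have := braid_conj' cs i i' hM
      rw [if_pos hev] at this
      exact this.symm

theorem p_comm_odd (i i' : B) (hM : M i i' ≠ 0) (hodd : ¬ Even (M i i')) (r : ℕ) :
    π (alternatingWord i' i r) * π (braidWord M i i')
      = π (braidWord M i i') * π (alternatingWord i i' r) := by
  induction r with
  | zero => simp [alternatingWord]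
  | succ r ih =>
    rw [alternatingWord_succ' i' i, alternatingWord_succ' i i', wordProd_cons, wordProd_cons,
      mul_assoc, ih, ← mul_assoc, ← mul_assoc]
    congr 1
    by_cases hr : Even r
    · rw [if_pos hr, if_pos hr]
      have := braid_conj cs i i' hM
      rw [if_neg hodd] at this
      exact this.symm
    · rw [if_neg hr, if_neg hr]
      have := braid_conj' cs i i' hM
      rw [if_neg hodd] at this
      exact this.symm

theorem ris_alt_conj_even (i i' : B) (hM : M i i' ≠ 0) (hev : Even (M i i')) (r : ℕ) :
    (ris (alternatingWord i i' r)).map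
        (fun x => (π (braidWord M i i'))⁻¹ * x * π (braidWord M i i'))
      = ris (alternatingWord i i' r) := by
  induction r with
  | zero => simp [alternatingWord]
  | succ r ih =>
    rw [alternatingWord_succ', ris_cons, map_cons, ih]
    congr 1
    have c1 : Commute (π (alternatingWord i i' r)) (π (braidWord M i i')) :=
      p_comm_even cs i i' hM hev r
    have ch : Commute (s (if Even r then i' else i)) (π (braidWord M i i')) := by
      by_cases hr : Even r
      · rw [if_pos hr]
        have := braid_conj cs i i' hM
        rw [if_pos hev] at this
        exact this.symm
      · rw [if_neg hr]
        have := braid_conj' cs i i' hM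
        rw [if_pos hev] at this
        exact this.symm
    have cA : Commute ((π (alternatingWord i i' r))⁻¹ * s (if Even r then i' else i)
        * π (alternatingWord i i' r)) (π (braidWord M i i')) :=
      (c1.inv_left.mul_left ch).mul_left c1
    rw [mul_assoc, cA.eq, ← mul_assoc, inv_mul_cancel, one_mul]

theorem ris_alt_conj_odd (i i' : B) (hM : M i i' ≠ 0) (hodd : ¬ Even (M i i')) (r : ℕ) :
    (ris (alternatingWord i' i r)).map
        (fun x => (π (braidWord M i i'))⁻¹ * x * π (braidWord M i i'))
      = ris (alternatingWord i i' r) := by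
  induction r with
  | zero => simp [alternatingWord]
  | succ r ih =>
    rw [alternatingWord_succ' i' i, alternatingWord_succ' i i', ris_cons, ris_cons, map_cons, ih]
    congr 1
    have hcomm := p_comm_odd cs i i' hM hodd r
    have hstep : π (braidWord M i i') * s (if Even r then i' else i)
        = s (if Even r then i else i') * π (braidWord M i i') := by
      by_cases hr : Even r
      · rw [if_pos hr, if_pos hr]
        have := braid_conj cs i i' hM
        rw [if_neg hodd] at this
        exact this
      · rw [if_neg hr, if_neg hr]
        have := braid_conj' cs i i' hM
        rw [if_neg hodd] at this
        exact this
    have key : (π (alternatingWord i' i r))⁻¹ * s (if Even r then i else i')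
        * π (alternatingWord i' i r) * π (braidWord M i i')
        = π (braidWord M i i')
          * ((π (alternatingWord i i' r))⁻¹ * s (if Even r then i' else i)
            * π (alternatingWord i i' r)) := by
      calc (π (alternatingWord i' i r))⁻¹ * s (if Even r then i else i')
            * π (alternatingWord i' i r) * π (braidWord M i i')
          = (π (alternatingWord i' i r))⁻¹ * s (if Even r then i else i')
            * (π (alternatingWord i' i r) * π (braidWord M i i')) := by group
        _ = (π (alternatingWord i' i r))⁻¹ * s (if Even r then i else i')
            * (π (braidWord M i i') * π (alternatingWord i i' r)) := by rw [hcomm]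
        _ = (π (alternatingWord i' i r))⁻¹
            * (s (if Even r then i else i') * π (braidWord M i i'))
            * π (alternatingWord i i' r) := by group
        _ = (π (alternatingWord i' i r))⁻¹
            * (π (braidWord M i i') * s (if Even r then i' else i))
            * π (alternatingWord i i' r) := by rw [hstep]
        _ = ((π (alternatingWord i' i r))⁻¹ * π (braidWord M i i'))
            * s (if Even r then i' else i) * π (alternatingWord i i' r) := by group
        _ = (π (braidWord M i i') * (π (alternatingWord i i' r))⁻¹)
            * s (if Even r then i' else i) * π (alternatingWord i i' r) := by
              congr 1
              congr 1
              have : (π (alternatingWord i' i r))⁻¹ * π (braidWord M i i')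
                  = π (braidWord M i i') * (π (alternatingWord i i' r))⁻¹ := by
                rw [inv_mul_eq_iff_eq_mul, ← mul_assoc, hcomm, mul_assoc,
                  mul_inv_cancel, mul_one]
              exact this
        _ = π (braidWord M i i')
            * ((π (alternatingWord i i' r))⁻¹ * s (if Even r then i' else i)
              * π (alternatingWord i i' r)) := by group
    calc (π (braidWord M i i'))⁻¹
          * ((π (alternatingWord i' i r))⁻¹ * s (if Even r then i else i')
            * π (alternatingWord i' i r)) * π (braidWord M i i')
        = (π (braidWord M i i'))⁻¹
          * ((π (alternatingWord i' i r))⁻¹ * s (if Even r then i else i')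
            * π (alternatingWord i' i r) * π (braidWord M i i')) := by group
      _ = (π (braidWord M i i'))⁻¹ * (π (braidWord M i i')
          * ((π (alternatingWord i i' r))⁻¹ * s (if Even r then i' else i)
            * π (alternatingWord i i' r))) := by rw [key]
      _ = (π (alternatingWord i i' r))⁻¹ * s (if Even r then i' else i)
            * π (alternatingWord i i' r) := by group

theorem sigma_liftable : M.IsLiftable (sigma cs) := by
  intro i i'
  by_cases hii : i = i'
  · subst hii
    rw [M.diagonal i, pow_one]
    apply Equiv.ext
    intro x
    exact sigmaFun_involutive cs i x
  · by_cases hM : M i i' = 0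
    · rw [hM, pow_zero]
    · have hpow : (sigma cs i * sigma cs i') ^ (M i i')
          = List.prod ((alternatingWord i i' (2 * M i i')).map (sigma cs)) :=
        (prod_map_alt_two_mul (sigma cs) i i' (M i i')).symm
      rw [hpow]
      apply Equiv.ext
      rintro ⟨t, ε⟩
      rw [prod_sigma_apply]
      have hπ : π (alternatingWord i i' (2 * M i i')) = 1 := by
        rw [cs.prod_alternatingWord_eq_mul_pow]
        have he : Even (2 * M i i') := by rw [Nat.even_iff]; omega
        rw [if_pos he, one_mul]
        have : 2 * M i i' / 2 = M i i' := by omega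
        rw [this]
        exact cs.simple_mul_simple_pow i i'
      have hsplit : ris (alternatingWord i i' (2 * M i i'))
          = ris (braidWord M i i') ++ ris (braidWord M i i') := by
        have h2 : 2 * M i i' = M i i' + M i i' := by ring
        by_cases hev : Even (M i i')
        · rw [h2, alt_split_even i i' hev (M i i'), ris_append]
          congr 1
          exact ris_alt_conj_even cs i i' hM hev (M i i')
        · rw [h2, alt_split_odd i i' hev (M i i'), ris_append]
          congr 1
          exact ris_alt_conj_odd cs i i' hM hev (M i i')
      rw [hsplit, hπ, count_append]
      have hcast : ((((ris (braidWord M i i')).count t + (ris (braidWord M i i')).count t : ℕ))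
          : ZMod 2) = 0 := by
        have h2c : ((((ris (braidWord M i i')).count t
              + (ris (braidWord M i i')).count t : ℕ)) : ZMod 2)
            = 2 * (((ris (braidWord M i i')).count t : ℕ) : ZMod 2) := by
          push_cast
          ring
        rw [h2c, show (2 : ZMod 2) = 0 from rfl, zero_mul]
      rw [hcast, add_zero]
      simp

/-- The reflection-parity representation. -/
noncomputable def phi : W →* Equiv.Perm (W × ZMod 2) := cs.lift ⟨sigma cs, sigma_liftable cs⟩

theorem phi_wordProd (ω : List B) : phi cs (π ω) = List.prod (ω.map (sigma cs)) := by
  show phi cs (List.prod (ω.map cs.simple)) = _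
  rw [map_list_prod, map_map]
  congr 1
  apply map_congr_left
  intro b _
  exact cs.lift_apply_simple (sigma_liftable cs) b

theorem count_ris_parity {ω ω' : List B} (h : π ω = π ω') (t : W) :
    (((ris ω).count t : ℕ) : ZMod 2) = ((ris ω').count t : ZMod 2) := by
  have h1 := prod_sigma_apply cs ω t 0
  have h2 := prod_sigma_apply cs ω' t 0
  rw [← phi_wordProd, h, phi_wordProd] at h1
  rw [h2] at h1
  have := congrArg Prod.snd h1
  simpa using this.symm

/-! ### Strong exchange -/

theorem count_lis_conj (μ : List B) (x : W) :
    (lis μ).count (π μ * x * (π μ)⁻¹) = (ris μ).count x := by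
  induction μ generalizing x with
  | nil => simp
  | cons a μ ih =>
    rw [lis_cons, ris_cons, count_cons, count_cons]
    have hmapcount : ((lis μ).map (fun y => s a * y * s a)).count (π (a :: μ) * x * (π (a :: μ))⁻¹)
        = (lis μ).count (π μ * x * (π μ)⁻¹) := by
      have hinj : Function.Injective (fun y : W => s a * y * s a) := by
        intro y z h
        simpa using mul_left_cancel (mul_right_cancel h)
      have happ : π (a :: μ) * x * (π (a :: μ))⁻¹
          = (fun y : W => s a * y * s a) (π μ * x * (π μ)⁻¹) := by
        simp only [cs.wordProd_cons, mul_inv_rev, cs.inv_simple]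
        group
      rw [happ, count_map_of_injective _ _ hinj]
    rw [hmapcount, ih]
    congr 1
    have hiff : (s a = π (a :: μ) * x * (π (a :: μ))⁻¹) ↔ ((π μ)⁻¹ * s a * π μ = x) := by
      rw [cs.wordProd_cons, mul_inv_rev, cs.inv_simple]
      constructor
      · intro h
        rw [show s a * π μ * x * ((π μ)⁻¹ * s a)
            = s a * (π μ * x * (π μ)⁻¹ * s a) by group] at h
        have h1 : π μ * x * (π μ)⁻¹ * s a = 1 := mul_eq_left.mp h.symm
        have h2 : π μ * x * (π μ)⁻¹ = (s a)⁻¹ := eq_inv_of_mul_eq_one_left h1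
        rw [cs.inv_simple] at h2
        rw [← h2]
        group
      · intro h
        rw [← h]
        have hg : s a * π μ * ((π μ)⁻¹ * s a * π μ) * ((π μ)⁻¹ * s a)
            = s a * s a * s a := by group
        rw [hg, cs.simple_mul_simple_self, one_mul]
    by_cases h : (π μ)⁻¹ * s a * π μ = x
    · rw [if_pos (beq_iff_eq.mpr (hiff.mpr h)), if_pos (beq_iff_eq.mpr h)]
    · rw [if_neg (fun hb => h (hiff.mp (beq_iff_eq.mp hb))),
        if_neg (fun hb => h (beq_iff_eq.mp hb))]

theorem strong_exchange_right (ω : List B) {t : W} (ht : cs.IsReflection t)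
    (h : ℓ (π ω * t) < ℓ (π ω)) : t ∈ ris ω := by
  obtain ⟨ψ, hψred, hψ⟩ := cs.exists_reduced_word' (π ω * t)
  have htt : t * t = 1 := CoxeterSystem.IsReflection.mul_self ht
  have htinv : t⁻¹ = t := CoxeterSystem.IsReflection.inv ht
  obtain ⟨q, iT, hq⟩ := id ht
  obtain ⟨μ, hμ⟩ := cs.wordProd_surjective q
  set ρ : List B := μ ++ ([iT] ++ μ.reverse) with hρdef
  have hπρ : π ρ = t := by
    rw [hρdef, cs.wordProd_append, cs.wordProd_append, cs.wordProd_singleton,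
      cs.wordProd_reverse, hμ, hq]
    group
  have hπeq : π ω = π (ψ ++ ρ) := by
    rw [cs.wordProd_append, hπρ, ← hψ, mul_assoc, htt, mul_one]
  have hpar := count_ris_parity cs hπeq t
  -- compute count in ψ ++ ρ
  have hψ0 : (ris ψ).count t = 0 := by
    rw [count_eq_zero]
    intro hmem
    have := (cs.isRightInversion_of_mem_rightInvSeq hψred hmem).2
    rw [← hψ] at this
    rw [mul_assoc, htt, mul_one] at this
    omega
  have hconj1 : ((ris ψ).map (fun x => (π ρ)⁻¹ * x * π ρ)).count t = (ris ψ).count t := by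
    have hinj : Function.Injective (fun x : W => (π ρ)⁻¹ * x * π ρ) := by
      intro y z hyz
      simpa using mul_left_cancel (mul_right_cancel hyz)
    have hfix : (fun x : W => (π ρ)⁻¹ * x * π ρ) t = t := by
      show (π ρ)⁻¹ * t * π ρ = t
      rw [hπρ]
      group
    conv_lhs => rw [← hfix]
    exact count_map_of_injective _ _ hinj t
  have hris2 : ris ([iT] ++ μ.reverse) = t :: ris μ.reverse := by
    have : ([iT] ++ μ.reverse) = iT :: μ.reverse := rfl
    rw [this, ris_cons, cs.wordProd_reverse, hμ, hq]
    congr 1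
    group
  have hconj2 : ((ris μ).map
        (fun x => (π ([iT] ++ μ.reverse))⁻¹ * x * π ([iT] ++ μ.reverse))).count t
      = (ris μ).count (s iT) := by
    have hπb : π ([iT] ++ μ.reverse) = s iT * q⁻¹ := by
      rw [cs.wordProd_append, cs.wordProd_singleton, cs.wordProd_reverse, hμ]
    have hinj : Function.Injective
        (fun x : W => (π ([iT] ++ μ.reverse))⁻¹ * x * π ([iT] ++ μ.reverse)) := by
      intro y z hyz
      simpa using mul_left_cancel (mul_right_cancel hyz)
    have hval : (fun x : W => (π ([iT] ++ μ.reverse))⁻¹ * x * π ([iT] ++ μ.reverse)) (s iT)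
        = t := by
      show (π ([iT] ++ μ.reverse))⁻¹ * s iT * π ([iT] ++ μ.reverse) = t
      rw [hπb, hq, mul_inv_rev, inv_inv, cs.inv_simple]
      simp [mul_assoc, cs.simple_mul_simple_cancel_left]
    conv_lhs => rw [← hval]
    exact count_map_of_injective _ _ hinj (s iT)
  have hrev : (ris μ.reverse).count t = (ris μ).count (s iT) := by
    rw [cs.rightInvSeq_reverse, count_reverse]
    have : t = π μ * s iT * (π μ)⁻¹ := by rw [hμ, hq]
    rw [this, count_lis_conj]
  -- put it all together
  have hcount : (ris (ψ ++ ρ)).count t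
      = (ris μ).count (s iT) + (1 + (ris μ).count (s iT)) := by
    rw [ris_append, count_append, hconj1, hψ0, zero_add, hρdef, ris_append, count_append,
      hconj2, hris2, count_cons]
    rw [if_pos (beq_iff_eq.mpr rfl), hrev]
    ring
  rw [hcount] at hpar
  by_contra hnot
  have h0 : (ris ω).count t = 0 := count_eq_zero.mpr hnot
  rw [h0] at hpar
  have : ((((ris μ).count (s iT) + (1 + (ris μ).count (s iT))) : ℕ) : ZMod 2) = 1 := by
    push_cast
    ring_nf
    rw [show ((ris μ).count (s iT) : ZMod 2) * 2 = 0 from by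
      rw [mul_comm, show (2 : ZMod 2) = 0 from rfl, zero_mul]]
    ring
  rw [this] at hpar
  simp at hpar

theorem strong_exchange_left (ω : List B) {t : W} (ht : cs.IsReflection t)
    (h : ℓ (t * π ω) < ℓ (π ω)) : t ∈ lis ω := by
  have h' : ℓ (π ω.reverse * t) < ℓ (π ω.reverse) := by
    rw [cs.wordProd_reverse]
    have : (π ω)⁻¹ * t = (t * π ω)⁻¹ := by
      rw [mul_inv_rev, CoxeterSystem.IsReflection.inv ht]
    rw [this, cs.length_inv, cs.length_inv]
    exact h
  have := strong_exchange_right cs ω.reverse ht h'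
  rw [cs.rightInvSeq_reverse] at this
  exact mem_reverse.mp this

theorem erase_right {ω : List B} {t : W} (hmem : t ∈ ris ω) :
    ∃ j, j < ω.length ∧ π ω * t = π (ω.eraseIdx j) := by
  obtain ⟨j, hj, hjt⟩ := List.mem_iff_getElem.mp hmem
  rw [cs.length_rightInvSeq] at hj
  refine ⟨j, hj, ?_⟩
  rw [← hjt, ← List.getD_eq_getElem _ 1 (by rw [cs.length_rightInvSeq]; exact hj)]
  exact cs.wordProd_mul_getD_rightInvSeq ω j

theorem erase_left {ω : List B} {t : W} (hmem : t ∈ lis ω) :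
    ∃ j, j < ω.length ∧ t * π ω = π (ω.eraseIdx j) := by
  obtain ⟨j, hj, hjt⟩ := List.mem_iff_getElem.mp hmem
  rw [cs.length_leftInvSeq] at hj
  refine ⟨j, hj, ?_⟩
  rw [← hjt, ← List.getD_eq_getElem _ 1 (by rw [cs.length_leftInvSeq]; exact hj)]
  exact cs.getD_leftInvSeq_mul_wordProd ω j

theorem lis_form {ω : List B} {t : W} (hmem : t ∈ lis ω) :
    ∃ j b, j < ω.length ∧ b ∈ ω ∧ t = π (ω.take j) * s b * (π (ω.take j))⁻¹ := by
  obtain ⟨j, hj, hjt⟩ := List.mem_iff_getElem.mp hmem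
  rw [cs.length_leftInvSeq] at hj
  refine ⟨j, ω[j], hj, List.getElem_mem hj, ?_⟩
  rw [← hjt, ← List.getD_eq_getElem _ 1 (by rw [cs.length_leftInvSeq]; exact hj),
    cs.getD_leftInvSeq]
  congr 2
  rw [List.getElem?_eq_getElem hj]
  simp

/-! ### Deletion -/

theorem double_erase (ω : List B) {j k : ℕ} (hjk : j < k) (hk : k < ω.length)
    (hdup : (ris ω).getD j 1 = (ris ω).getD k 1) :
    π ω = π ((ω.eraseIdx j).eraseIdx (k - 1)) := by
  set! t := (ris ω).getD j 1 with h₁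
  set! t' := (ris (ω.eraseIdx j)).getD (k - 1) 1 with h₂
  have h₃ : t' = (ris ω).getD k 1 := by
    rw [h₂, cs.getD_rightInvSeq, cs.getD_rightInvSeq,
      (Nat.sub_add_cancel (by omega) : k - 1 + 1 = k), eraseIdx_eq_take_drop_succ,
      drop_append, drop_of_length_le (by simp [hjk.le]), length_take,
      drop_drop, nil_append, min_eq_left_of_lt (hjk.trans hk), Nat.add_comm,
      ← add_assoc, Nat.sub_add_cancel (by omega), mul_left_inj, mul_right_inj]
    congr 2
    show (take j ω ++ drop (j + 1) ω)[k - 1]? = ω[k]?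
    rw [getElem?_append_right (by simp [Nat.le_sub_one_of_lt hjk]), getElem?_drop]
    congr
    show j + 1 + (k - 1 - List.length (take j ω)) = k
    rw [length_take]
    omega
  have h₄ : t * t' = 1 := by
    rw [h₁, h₃, hdup]
    exact cs.getD_rightInvSeq_mul_self _ _
  calc
    π ω   = π ω * t * t'                              := by rw [mul_assoc, h₄]; group
    _     = (π (ω.eraseIdx j)) * t'                   :=
        congrArg (· * t') (cs.wordProd_mul_getD_rightInvSeq _ _)
    _     = π ((ω.eraseIdx j).eraseIdx (k - 1))      :=
        cs.wordProd_mul_getD_rightInvSeq _ _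

theorem exists_min_nonreduced (ω : List B) (h : ¬ cs.IsReduced ω) :
    ∃ k, k < ω.length ∧ cs.IsReduced (ω.take k) ∧ ¬ cs.IsReduced (ω.take (k+1)) := by
  induction ω using List.reverseRecOn with
  | nil => exact absurd (by simp [CoxeterSystem.IsReduced]) h
  | append_singleton ω₁ a ih =>
    by_cases h₁ : cs.IsReduced ω₁
    · refine ⟨ω₁.length, by simp, ?_, ?_⟩
      · rw [List.take_left]
        exact h₁
      · rw [List.take_of_length_le (by simp)]
        exact h
    · obtain ⟨k, hk, h2, h3⟩ := ih h₁
      refine ⟨k, by simp; omega, ?_, ?_⟩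
      · rwa [List.take_append_of_le_length hk.le]
      · rwa [List.take_append_of_le_length (by omega)]

theorem ris_dup_of_not_reduced {ω : List B} (h : ¬ cs.IsReduced ω) :
    ∃ j k, j < k ∧ k < ω.length ∧ (ris ω).getD j 1 = (ris ω).getD k 1 := by
  obtain ⟨k, hk, hred, hnred⟩ := exists_min_nonreduced cs ω h
  have htake : ω.take (k+1) = ω.take k ++ [ω[k]] := by
    rw [take_succ, getElem?_eq_getElem hk]
    rfl
  have hμlen : (ω.take k).length = k := by
    rw [length_take]
    omega
  have hπμ : ℓ (π (ω.take k)) = k := by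
    rw [hred, hμlen]
  have hlt : ℓ (π (ω.take k) * s (ω[k])) < ℓ (π (ω.take k)) := by
    rcases cs.length_mul_simple (π (ω.take k)) ω[k] with hp | hm
    · exfalso
      apply hnred
      show ℓ (π (ω.take (k+1))) = (ω.take (k+1)).length
      rw [htake, cs.wordProd_append, cs.wordProd_singleton, hp, hπμ, length_append,
        hμlen, length_singleton]
    · omega
  have hmem := strong_exchange_right cs (ω.take k) (cs.isReflection_simple ω[k]) hlt
  obtain ⟨p, hp, hpt⟩ := List.mem_iff_getElem.mp hmem
  rw [cs.length_rightInvSeq, hμlen] at hp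
  refine ⟨p, k, hp, hk, ?_⟩
  have hgetDp : (ris (ω.take k)).getD p 1 = s (ω[k]) := by
    rw [List.getD_eq_getElem _ 1 (by rw [cs.length_rightInvSeq, hμlen]; exact hp)]
    exact hpt
  have hdropsplit : ω.drop (p+1) = (ω.take k).drop (p+1) ++ ω.drop k := by
    rw [List.drop_take]
    have : ω.drop k = (ω.drop (p+1)).drop (k - (p+1)) := by
      rw [drop_drop]
      congr 1
      omega
    rw [this]
    exact (List.take_append_drop _ _).symm
  have hget? : (ω.take k)[p]? = ω[p]? := by
    rw [List.getElem?_take_of_lt hp]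
  have hp1 : (ris ω).getD p 1
      = (π (ω.drop k))⁻¹ * ((ris (ω.take k)).getD p 1) * π (ω.drop k) := by
    rw [cs.getD_rightInvSeq, cs.getD_rightInvSeq, hget?, hdropsplit, cs.wordProd_append,
      mul_inv_rev]
    group
  have hdropk : ω.drop k = ω[k] :: ω.drop (k+1) := List.drop_eq_getElem_cons hk
  have hgetk : ω[k]? = some ω[k] := by
    rw [List.getElem?_eq_getElem hk]
  rw [hp1, hgetDp, cs.getD_rightInvSeq, hgetk]
  simp only [Option.map_some, Option.getD_some]
  rw [hdropk, cs.wordProd_cons, mul_inv_rev, cs.inv_simple,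
    mul_assoc (π (ω.drop (k+1)))⁻¹ (s ω[k]) (s ω[k]), cs.simple_mul_simple_self, mul_one,
    ← mul_assoc]

theorem not_nodup_ris_of_not_reduced {ω : List B} (h : ¬ cs.IsReduced ω) :
    ¬ (ris ω).Nodup := by
  obtain ⟨j, k, hjk, hk, hdup⟩ := ris_dup_of_not_reduced cs h
  intro hnodup
  have hjlen : j < (ris ω).length := by rw [cs.length_rightInvSeq]; omega
  have hklen : k < (ris ω).length := by rw [cs.length_rightInvSeq]; omega
  rw [List.getD_eq_getElem _ 1 hjlen, List.getD_eq_getElem _ 1 hklen] at hdup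
  exact absurd ((List.Nodup.getElem_inj_iff hnodup).mp hdup) (by omega)

theorem exists_reduced_sublist (ω : List B) :
    ∃ l, l.Sublist ω ∧ cs.IsReduced l ∧ π l = π ω := by
  suffices H : ∀ n (ω : List B), ω.length ≤ n →
      ∃ l, l.Sublist ω ∧ cs.IsReduced l ∧ π l = π ω from H ω.length ω le_rfl
  intro n
  induction n with
  | zero =>
    intro ω hω
    have : ω = [] := List.length_eq_zero_iff.mp (by omega)
    subst this
    exact ⟨[], Sublist.refl _, by simp [CoxeterSystem.IsReduced], rfl⟩
  | succ n ih =>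
    intro ω hω
    by_cases hred : cs.IsReduced ω
    · exact ⟨ω, Sublist.refl _, hred, rfl⟩
    · obtain ⟨j, k, hjk, hk, hdup⟩ := ris_dup_of_not_reduced cs hred
      have heq := double_erase cs ω hjk hk hdup
      have hsub : ((ω.eraseIdx j).eraseIdx (k-1)).Sublist ω :=
        ((ω.eraseIdx j).eraseIdx_sublist (k-1)).trans (ω.eraseIdx_sublist j)
      have hlen : ((ω.eraseIdx j).eraseIdx (k-1)).length ≤ n := by
        have l1 : (ω.eraseIdx j).length = ω.length - 1 := by
          rw [length_eraseIdx]
          simp only [if_pos (by omega : j < ω.length)]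
        have l2 : ((ω.eraseIdx j).eraseIdx (k-1)).length = (ω.eraseIdx j).length - 1 := by
          rw [length_eraseIdx]
          simp only [if_pos (by omega : k - 1 < (ω.eraseIdx j).length)]
        omega
      obtain ⟨l, hl1, hl2, hl3⟩ := ih _ hlen
      exact ⟨l, hl1.trans hsub, hl2, by rw [hl3, ← heq]⟩

/-! ### The chain order -/

end BruhatAux

/-- The "chain order": `u ≤ v` if one can go from `u` up to `v` multiplying by reflections,
increasing length each time. -/
inductive BruhatChainLE (cs : CoxeterSystem M W) : W → W → Prop
  | refl (w : W) : BruhatChainLE cs w w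
  | step {u v : W} (t : W) : BruhatChainLE cs u v → cs.IsReflection t →
      cs.length v < cs.length (v * t) → BruhatChainLE cs u (v * t)

namespace BruhatAux

open CoxeterSystem List

variable (cs : CoxeterSystem M W)

local prefix:100 "s" => cs.simple
local prefix:100 "π" => cs.wordProd
local prefix:100 "ℓ" => cs.length
local prefix:100 "ris" => cs.rightInvSeq
local prefix:100 "lis" => cs.leftInvSeq

theorem chain_trans {a b c : W} (h1 : BruhatChainLE cs a b) (h2 : BruhatChainLE cs b c) :
    BruhatChainLE cs a c := by
  induction h2 with
  | refl => exact h1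
  | step t h ht hlen ih => exact BruhatChainLE.step t ih ht hlen

theorem chain_zkey {z₂ t : W} (a : B) (ht : cs.IsReflection t)
    (h1 : ℓ z₂ < ℓ (z₂ * t)) (h2 : ℓ (z₂ * t * s a) < ℓ (z₂ * t))
    (h3 : ℓ z₂ < ℓ (z₂ * s a)) :
    BruhatChainLE cs (z₂ * s a) (z₂ * t) := by
  have hodd : Odd (ℓ t) := CoxeterSystem.IsReflection.odd_length ht
  have hpar : ℓ (z₂ * t) % 2 = (ℓ z₂ + ℓ t) % 2 := cs.length_mul_mod_two z₂ t
  have hlen2 : ℓ (z₂ * s a) = ℓ z₂ + 1 := by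
    rcases cs.length_mul_simple z₂ a with hp | hm
    · exact hp
    · omega
  have hlenz : ℓ (z₂ * t * s a) + 1 = ℓ (z₂ * t) := by
    rcases cs.length_mul_simple (z₂ * t) a with hp | hm
    · omega
    · exact hm
  by_cases hA : ℓ (z₂ * s a) < ℓ (z₂ * t * s a)
  · -- two explicit steps
    have e1 : (z₂ * s a) * (s a * t * s a) = z₂ * t * s a := by
      rw [show z₂ * s a * (s a * t * s a) = z₂ * (s a * s a) * t * s a by group,
        cs.simple_mul_simple_self, mul_one]
    have r1 : cs.IsReflection (s a * t * s a) := by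
      have := CoxeterSystem.IsReflection.conj ht (s a)
      rwa [cs.inv_simple] at this
    have step1 : BruhatChainLE cs (z₂ * s a) (z₂ * t * s a) := by
      rw [← e1]
      exact BruhatChainLE.step _ (BruhatChainLE.refl _) r1 (by rw [e1]; exact hA)
    have e2 : (z₂ * t * s a) * s a = z₂ * t := by
      rw [mul_assoc, cs.simple_mul_simple_self, mul_one]
    have step2 : BruhatChainLE cs (z₂ * s a) (z₂ * t) := by
      rw [← e2]
      exact BruhatChainLE.step _ step1 (cs.isReflection_simple a) (by rw [e2]; omega)
    exact step2
  · -- the tight case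
    have hz : ℓ (z₂ * t) = ℓ z₂ + 1 := by
      have hne : ℓ (z₂ * t) % 2 ≠ ℓ z₂ % 2 := by
        obtain ⟨c, hc⟩ := hodd
        omega
      omega
    obtain ⟨ζ₀, hζ₀red, hζ₀⟩ := cs.exists_reduced_word' (z₂ * t * s a)
    have hπζ : π (ζ₀ ++ [a]) = z₂ * t := by
      rw [cs.wordProd_append, cs.wordProd_singleton, ← hζ₀, mul_assoc,
        cs.simple_mul_simple_self, mul_one]
    have hζlen : (ζ₀ ++ [a]).length = ℓ (z₂ * t) := by
      rw [length_append, length_singleton]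
      have : ζ₀.length = ℓ (z₂ * t * s a) := by rw [hζ₀]; exact hζ₀red.symm
      omega
    have hζred : cs.IsReduced (ζ₀ ++ [a]) := by
      show ℓ (π (ζ₀ ++ [a])) = _
      rw [hπζ, hζlen]
    have hinv : ℓ (π (ζ₀ ++ [a]) * t) < ℓ (π (ζ₀ ++ [a])) := by
      rw [hπζ, mul_assoc, CoxeterSystem.IsReflection.mul_self ht, mul_one]
      omega
    obtain ⟨j, hj, hjer⟩ := erase_right cs (strong_exchange_right cs (ζ₀ ++ [a]) ht hinv)
    rw [hπζ] at hjer
    have hz₂ : z₂ = π ((ζ₀ ++ [a]).eraseIdx j) := by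
      rw [← hjer, mul_assoc, CoxeterSystem.IsReflection.mul_self ht, mul_one]
    rw [length_append, length_singleton] at hj
    by_cases hjlast : j = ζ₀.length
    · -- erased the last letter: z₂ = π ζ₀ = z₂ * t * s a, so z₂ * s a = z₂ * t
      have her : (ζ₀ ++ [a]).eraseIdx j = ζ₀ := by
        rw [hjlast, eraseIdx_eq_take_drop_succ, take_left]
        have : ζ₀.length + 1 = (ζ₀ ++ [a]).length := by simp
        rw [this, drop_length, append_nil]
      rw [her] at hz₂
      rw [← hζ₀] at hz₂
      have : z₂ * s a = z₂ * t := by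
        conv_lhs => rw [hz₂]
        rw [mul_assoc, cs.simple_mul_simple_self, mul_one]
      rw [this]
      exact BruhatChainLE.refl _
    · -- erased inside ζ₀: contradiction
      exfalso
      have hjlt : j < ζ₀.length := by omega
      have her : (ζ₀ ++ [a]).eraseIdx j = ζ₀.eraseIdx j ++ [a] := by
        rw [eraseIdx_eq_take_drop_succ, eraseIdx_eq_take_drop_succ,
          take_append_of_le_length hjlt.le, drop_append_of_le_length (by omega),
          append_assoc]
      rw [her, cs.wordProd_append, cs.wordProd_singleton] at hz₂
      have : z₂ * s a = π (ζ₀.eraseIdx j) := by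
        rw [hz₂, mul_assoc, cs.simple_mul_simple_self, mul_one]
      have hb : ℓ (z₂ * s a) ≤ (ζ₀.eraseIdx j).length := this ▸ cs.length_wordProd_le _
      have hb2 : (ζ₀.eraseIdx j).length = ζ₀.length - 1 := by
        rw [length_eraseIdx, if_pos hjlt]
      have hb3 : ζ₀.length = ℓ (z₂ * t * s a) := by rw [hζ₀]; exact hζ₀red.symm
      omega

theorem chain_mul_simple {x y : W} (a : B) (h : BruhatChainLE cs x y) :
    (ℓ y < ℓ (y * s a) → BruhatChainLE cs (x * s a) (y * s a)) ∧
    (ℓ (y * s a) < ℓ y → BruhatChainLE cs (x * s a) y) := by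
  induction h with
  | refl =>
    constructor
    · intro _
      exact BruhatChainLE.refl _
    · intro hlt
      have e : (x * s a) * s a = x := by
        rw [mul_assoc, cs.simple_mul_simple_self, mul_one]
      have : BruhatChainLE cs (x * s a) ((x * s a) * s a) :=
        BruhatChainLE.step _ (BruhatChainLE.refl _) (cs.isReflection_simple a)
          (by rw [e]; exact hlt)
      rwa [e] at this
  | @step v t hxz ht hlen ih =>
    constructor
    · intro h1
      by_cases hza : ℓ v < ℓ (v * s a)
      · have c := ih.1 hza
        have e1 : (v * s a) * (s a * t * s a) = v * t * s a := by
          rw [show v * s a * (s a * t * s a) = v * (s a * s a) * t * s a by group,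
            cs.simple_mul_simple_self, mul_one]
        have r1 : cs.IsReflection (s a * t * s a) := by
          have := CoxeterSystem.IsReflection.conj ht (s a)
          rwa [cs.inv_simple] at this
        have hlen2 : ℓ (v * s a) = ℓ v + 1 := by
          rcases cs.length_mul_simple v a with hp | hm
          · exact hp
          · omega
        have : BruhatChainLE cs (x * s a) ((v * s a) * (s a * t * s a)) :=
          BruhatChainLE.step _ c r1 (by rw [e1]; omega)
        rwa [e1] at this
      · have hza' : ℓ (v * s a) < ℓ v := by
          have := cs.length_mul_simple_ne v a
          omega
        have c := ih.2 hza'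
        have c2 : BruhatChainLE cs (x * s a) (v * t) := BruhatChainLE.step _ c ht hlen
        exact BruhatChainLE.step _ c2 (cs.isReflection_simple a) h1
    · intro h2
      by_cases hza : ℓ v < ℓ (v * s a)
      · have c := ih.1 hza
        exact chain_trans cs c (chain_zkey cs a ht hlen h2 hza)
      · have hza' : ℓ (v * s a) < ℓ v := by
          have := cs.length_mul_simple_ne v a
          omega
        have c := ih.2 hza'
        exact BruhatChainLE.step _ c ht hlen

theorem chain_of_sublist {l ω : List B} (hl : l.Sublist ω) (hred : cs.IsReduced ω) :
    BruhatChainLE cs (π l) (π ω) := by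
  induction ω using List.reverseRecOn generalizing l with
  | nil =>
    rw [List.sublist_nil.mp hl]
    exact BruhatChainLE.refl _
  | append_singleton ω₁ a ih =>
    have hred₁ : cs.IsReduced ω₁ := by
      have := CoxeterSystem.IsReduced.take hred ω₁.length
      rwa [take_left] at this
    have hlenstep : ℓ (π ω₁) < ℓ (π ω₁ * s a) := by
      have e : π (ω₁ ++ [a]) = π ω₁ * s a := by
        rw [cs.wordProd_append, cs.wordProd_singleton]
      have h1 : ℓ (π ω₁ * s a) = ω₁.length + 1 := by
        rw [← e, hred, length_append, length_singleton]
      have h2 : ℓ (π ω₁) = ω₁.length := hred₁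
      omega
    obtain ⟨l₁, l₂, rfl, hsub₁, hsub₂⟩ := List.sublist_append_iff.mp hl
    rcases List.sublist_singleton.mp hsub₂ with rfl | rfl
    · rw [append_nil]
      have c := ih hsub₁ hred₁
      have : BruhatChainLE cs (π l₁) (π ω₁ * s a) :=
        BruhatChainLE.step _ c (cs.isReflection_simple a) hlenstep
      rwa [cs.wordProd_append, cs.wordProd_singleton]
    · have c := ih hsub₁ hred₁
      have := (chain_mul_simple cs a c).1 hlenstep
      rw [cs.wordProd_append, cs.wordProd_singleton, cs.wordProd_append, cs.wordProd_singleton]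
      exact this

theorem sublist_of_chain {x v : W} (h : BruhatChainLE cs x v) :
    ∀ {ω : List B}, cs.IsReduced ω → π ω = v →
      ∃ l, l.Sublist ω ∧ cs.IsReduced l ∧ π l = x := by
  induction h with
  | refl =>
    intro ω hred hπ
    exact ⟨ω, Sublist.refl _, hred, hπ⟩
  | @step z t hxz ht hlen ih =>
    intro ω hred hπ
    have hinv : ℓ (π ω * t) < ℓ (π ω) := by
      rw [hπ, mul_assoc, CoxeterSystem.IsReflection.mul_self ht, mul_one]
      exact hlen
    obtain ⟨j, hj, hjer⟩ := erase_right cs (strong_exchange_right cs ω ht hinv)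
    have hπz : π (ω.eraseIdx j) = z := by
      rw [← hjer, hπ, mul_assoc, CoxeterSystem.IsReflection.mul_self ht, mul_one]
    obtain ⟨l₀, hl₀sub, hl₀red, hl₀π⟩ := exists_reduced_sublist cs (ω.eraseIdx j)
    rw [hπz] at hl₀π
    obtain ⟨l, hl1, hl2, hl3⟩ := ih hl₀red hl₀π
    exact ⟨l, (hl1.trans hl₀sub).trans (ω.eraseIdx_sublist j), hl2, hl3⟩

/-! ### The subword property -/

theorem chain_of_le {u w : W} (h : cs.bruhatLE u w) : BruhatChainLE cs u w := by
  obtain ⟨ω, hred, hπ, l, hl, hπl⟩ := h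
  rw [← hπ, ← hπl]
  exact chain_of_sublist cs hl hred

theorem le_of_chain {u w : W} (h : BruhatChainLE cs u w) : cs.bruhatLE u w := by
  obtain ⟨ω, hred, hπ⟩ := cs.exists_reduced_word' w
  obtain ⟨l, hl, _, hπl⟩ := sublist_of_chain cs h hred hπ.symm
  exact ⟨ω, hred, hπ.symm, l, hl, hπl⟩

theorem subword {u w : W} (h : cs.bruhatLE u w) {ω : List B} (hred : cs.IsReduced ω)
    (hπ : π ω = w) : ∃ l, l.Sublist ω ∧ cs.IsReduced l ∧ π l = u :=
  sublist_of_chain cs (chain_of_le cs h) hred hπ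

theorem bruhat_trans {u v w : W} (h1 : cs.bruhatLE u v) (h2 : cs.bruhatLE v w) :
    cs.bruhatLE u w :=
  le_of_chain cs (chain_trans cs (chain_of_le cs h1) (chain_of_le cs h2))

theorem le_of_sublist {l ω : List B} (hred : cs.IsReduced ω) (hl : l.Sublist ω) :
    cs.bruhatLE (π l) (π ω) :=
  ⟨ω, hred, rfl, l, hl, rfl⟩

/-! ### Parabolic subgroups -/

theorem wordProd_mem_parabolic {A : Set B} {l : List B} (h : ∀ b ∈ l, b ∈ A) :
    π l ∈ cs.parabolic A := by
  induction l with
  | nil => exact one_mem _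
  | cons i l ih =>
    rw [cs.wordProd_cons]
    exact mul_mem (Subgroup.subset_closure ⟨i, h i mem_cons_self, rfl⟩)
      (ih fun b hb => h b (mem_cons_of_mem i hb))

theorem exists_word_of_mem_parabolic {A : Set B} {g : W} (h : g ∈ cs.parabolic A) :
    ∃ l : List B, (∀ b ∈ l, b ∈ A) ∧ π l = g := by
  induction h using Subgroup.closure_induction with
  | mem x hx =>
    obtain ⟨i, hi, rfl⟩ := hx
    exact ⟨[i], by simpa using hi, cs.wordProd_singleton i⟩
  | one => exact ⟨[], by simp, rfl⟩
  | mul x y _ _ hx hy =>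
    obtain ⟨l₁, h₁, rfl⟩ := hx
    obtain ⟨l₂, h₂, rfl⟩ := hy
    exact ⟨l₁ ++ l₂, fun b hb => by
      rcases mem_append.mp hb with h | h
      · exact h₁ b h
      · exact h₂ b h, cs.wordProd_append l₁ l₂⟩
  | inv x _ hx =>
    obtain ⟨l, h₁, rfl⟩ := hx
    exact ⟨l.reverse, fun b hb => h₁ b (mem_reverse.mp hb), cs.wordProd_reverse l⟩

theorem exists_reduced_word_of_mem_parabolic {A : Set B} {g : W} (h : g ∈ cs.parabolic A) :
    ∃ l : List B, (∀ b ∈ l, b ∈ A) ∧ cs.IsReduced l ∧ π l = g := by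
  obtain ⟨l, hl, hπ⟩ := exists_word_of_mem_parabolic cs h
  obtain ⟨l', hsub, hred, hπ'⟩ := exists_reduced_sublist cs l
  exact ⟨l', fun b hb => hl b (hsub.subset hb), hred, by rw [hπ', hπ]⟩

theorem ris_mem_parabolic {A : Set B} {ρ : List B} (hρ : ∀ b ∈ ρ, b ∈ A) {t : W}
    (ht : t ∈ ris ρ) : t ∈ cs.parabolic A := by
  induction ρ with
  | nil => simp at ht
  | cons i ρ ih =>
    rw [ris_cons] at ht
    rcases mem_cons.mp ht with rfl | h
    · have h0 : π ρ ∈ cs.parabolic A :=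
        wordProd_mem_parabolic cs (fun b hb => hρ b (mem_cons_of_mem i hb))
      have h2 : s i ∈ cs.parabolic A :=
        Subgroup.subset_closure ⟨i, hρ i mem_cons_self, rfl⟩
      exact mul_mem (mul_mem (inv_mem h0) h2) h0
    · exact ih (fun b hb => hρ b (mem_cons_of_mem i hb)) h

/-! ### Disjointness of parabolics -/

theorem inter_triv {J : Set B} {γ : List B} {c : W}
    (hγred : cs.IsReduced γ) (hγπ : π γ = c)
    (hdisj : cs.support c ∩ J = ∅) {g : W}
    (hgJ : g ∈ cs.parabolic J) (hgK : g ∈ cs.parabolic {b | b ∈ γ}) : g = 1 := by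
  by_contra hg
  obtain ⟨ρJ, hρJA, hρJred, hρJπ⟩ := exists_reduced_word_of_mem_parabolic cs hgJ
  obtain ⟨ρK, hρKA, hρKred, hρKπ⟩ := exists_reduced_word_of_mem_parabolic cs hgK
  cases ρJ with
  | nil => exact hg (by rw [← hρJπ]; rfl)
  | cons j ρ' =>
    have hdesc : ℓ (s j * g) < ℓ g := by
      have h1 : s j * g = π ρ' := by
        rw [← hρJπ, cs.wordProd_cons, cs.simple_mul_simple_cancel_left]
      have h2 : ℓ g = ρ'.length + 1 := by
        rw [← hρJπ, hρJred, length_cons]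
      have h3 : ℓ (π ρ') ≤ ρ'.length := cs.length_wordProd_le ρ'
      rw [h1]
      omega
    have hmem := strong_exchange_left cs ρK (cs.isReflection_simple j)
      (by rw [hρKπ]; exact hdesc)
    obtain ⟨r, b, hr, hb, hfor⟩ := lis_form cs hmem
    have hπw : π (ρK.take r ++ [b] ++ (ρK.take r).reverse) = s j := by
      rw [cs.wordProd_append, cs.wordProd_append, cs.wordProd_singleton, cs.wordProd_reverse,
        ← hfor]
    have hwletters : ∀ x ∈ ρK.take r ++ [b] ++ (ρK.take r).reverse, x ∈ γ := by
      intro x hx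
      rcases mem_append.mp hx with hx | hx
      · rcases mem_append.mp hx with hx | hx
        · exact hρKA x ((take_sublist r ρK).subset hx)
        · rw [mem_singleton.mp hx]
          exact hρKA b hb
      · exact hρKA x ((take_sublist r ρK).subset (mem_reverse.mp hx))
    obtain ⟨lred, hlsub, hlred, hlπ⟩ :=
      exists_reduced_sublist cs (ρK.take r ++ [b] ++ (ρK.take r).reverse)
    rw [hπw] at hlπ
    have hlen1 : lred.length = 1 := by
      rw [← hlred, hlπ]
      exact cs.length_simple j
    obtain ⟨b', rfl⟩ := List.length_eq_one_iff.mp hlen1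
    have hsb : s b' = s j := by simpa using hlπ
    have hb'γ : b' ∈ γ := hwletters b' (hlsub.subset (mem_singleton_self b'))
    obtain ⟨α, β, hγeq⟩ := List.append_of_mem hb'γ
    have hπγ' : π (α ++ j :: β) = c := by
      rw [← hγπ, hγeq, cs.wordProd_append, cs.wordProd_append, cs.wordProd_cons,
        cs.wordProd_cons, hsb]
    have hred' : cs.IsReduced (α ++ j :: β) := by
      show ℓ (π (α ++ j :: β)) = (α ++ j :: β).length
      rw [hπγ', ← hγπ, hγred, hγeq]
      simp
    have hjsupp : j ∈ cs.support c := ⟨α ++ j :: β, hred', hπγ', by simp⟩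
    have hjJ : j ∈ J := hρJA j mem_cons_self
    have hmem2 : j ∈ cs.support c ∩ J := ⟨hjsupp, hjJ⟩
    rw [hdisj] at hmem2
    exact hmem2

theorem reduced_append {J : Set B} {γ : List B} {c : W}
    (hγred : cs.IsReduced γ) (hγπ : π γ = c)
    (hdisj : cs.support c ∩ J = ∅)
    {ρ γ' : List B} (hρred : cs.IsReduced ρ) (hρJ : ∀ b ∈ ρ, b ∈ J)
    (hγ'red : cs.IsReduced γ') (hγ'K : ∀ b ∈ γ', b ∈ γ) :
    cs.IsReduced (ρ ++ γ') := by
  by_contra hnred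
  apply not_nodup_ris_of_not_reduced cs hnred
  rw [ris_append]
  have hinj : Function.Injective (fun x : W => (π γ')⁻¹ * x * π γ') := by
    intro y z hyz
    simpa using mul_left_cancel (mul_right_cancel hyz)
  refine List.Nodup.append ((hρred.nodup_rightInvSeq).map hinj) hγ'red.nodup_rightInvSeq ?_
  intro x hx1 hx2
  obtain ⟨y, hy, rfl⟩ := List.mem_map.mp hx1
  have hyJ : y ∈ cs.parabolic J := ris_mem_parabolic cs hρJ hy
  have hxK : (π γ')⁻¹ * y * π γ' ∈ cs.parabolic {b | b ∈ γ} :=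
    ris_mem_parabolic cs (fun b hb => hγ'K b hb) hx2
  have hγ'mem : π γ' ∈ cs.parabolic {b | b ∈ γ} :=
    wordProd_mem_parabolic cs (fun b hb => hγ'K b hb)
  have hyK : y ∈ cs.parabolic {b | b ∈ γ} := by
    have := mul_mem (mul_mem hγ'mem hxK) (inv_mem hγ'mem)
    rwa [show π γ' * ((π γ')⁻¹ * y * π γ') * (π γ')⁻¹ = y by group] at this
  have hy1 : y = 1 := inter_triv cs hγred hγπ hdisj hyJ hyK
  have hrefl : cs.IsReflection y := cs.isReflection_of_mem_rightInvSeq ρ hy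
  have hodd := CoxeterSystem.IsReflection.odd_length hrefl
  rw [hy1] at hodd
  simp at hodd

end BruhatAux

open BruhatAux

theorem bruhat_interval_iso_of_horospherical
    (cs : CoxeterSystem M W) (J : Set B)
    (hfin : Finite (cs.parabolic J))
    (w0J : W) (hw0J : w0J ∈ cs.parabolic J)
    (hw0Jmax : ∀ u ∈ cs.parabolic J, cs.length u ≤ cs.length w0J)
    (c : W) (hc : ∃ l : List B, l.Nodup ∧ cs.wordProd l = c)
    (hdisj : cs.support c ∩ J = ∅)
    (w : W) (hw : w = w0J * c)
    (hlen : cs.length w = cs.length w0J + cs.length c) :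
    ∃ f : {z : W // cs.bruhatLE z w} ≃
        {u : W // cs.bruhatLE u w0J} × {v : W // cs.bruhatLE v c},
      (∀ z : {z : W // cs.bruhatLE z w}, (z : W) = ((f z).1 : W) * ((f z).2 : W)) ∧
      (∀ (z : {z : W // cs.bruhatLE z w}) (u v : W),
        cs.bruhatLE u w0J → cs.bruhatLE v c → (z : W) = u * v →
          u = ((f z).1 : W) ∧ v = ((f z).2 : W)) ∧
      (∀ z z' : {z : W // cs.bruhatLE z w},
        cs.bruhatLE (z : W) (z' : W) ↔
          cs.bruhatLE ((f z).1 : W) ((f z').1 : W) ∧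
          cs.bruhatLE ((f z).2 : W) ((f z').2 : W)) := by
  subst hw
  obtain ⟨ω0, hω0J, hω0red, hω0π⟩ := exists_reduced_word_of_mem_parabolic cs hw0J
  obtain ⟨γ, hγred, hγπ'⟩ := cs.exists_reduced_word' c
  have hγπ : cs.wordProd γ = c := hγπ'.symm
  have hπω : cs.wordProd (ω0 ++ γ) = w0J * c := by
    rw [cs.wordProd_append, hω0π, hγπ]
  have hω0len : ω0.length = cs.length w0J := by rw [← hω0π]; exact hω0red.symm
  have hγlen : γ.length = cs.length c := by rw [← hγπ]; exact hγred.symm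
  have hωred : cs.IsReduced (ω0 ++ γ) := by
    show cs.length (cs.wordProd (ω0 ++ γ)) = (ω0 ++ γ).length
    rw [hπω, List.length_append, hω0len, hγlen]
    exact hlen
  have memJ : ∀ {u : W}, cs.bruhatLE u w0J → u ∈ cs.parabolic J := by
    intro u hu
    obtain ⟨ρ, hsub, _, hπρ⟩ := subword cs hu hω0red hω0π
    rw [← hπρ]
    exact wordProd_mem_parabolic cs (fun b hb => hω0J b (hsub.subset hb))
  have memK : ∀ {v : W}, cs.bruhatLE v c → v ∈ cs.parabolic {b | b ∈ γ} := by
    intro v hv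
    obtain ⟨l, hsub, _, hπl⟩ := subword cs hv hγred hγπ
    rw [← hπl]
    exact wordProd_mem_parabolic cs (fun b hb => hsub.subset hb)
  have huniq : ∀ u v u' v' : W, cs.bruhatLE u w0J → cs.bruhatLE v c →
      cs.bruhatLE u' w0J → cs.bruhatLE v' c → u * v = u' * v' → u = u' ∧ v = v' := by
    intro u v u' v' hu hv hu' hv' heq
    have hg : u'⁻¹ * u = v' * v⁻¹ := by
      have h2 : u'⁻¹ * (u * v) * v⁻¹ = u'⁻¹ * (u' * v') * v⁻¹ := by rw [heq]
      calc u'⁻¹ * u = u'⁻¹ * (u * v) * v⁻¹ := by group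
        _ = u'⁻¹ * (u' * v') * v⁻¹ := h2
        _ = v' * v⁻¹ := by group
    have hgJ : u'⁻¹ * u ∈ cs.parabolic J := mul_mem (inv_mem (memJ hu')) (memJ hu)
    have hgK : u'⁻¹ * u ∈ cs.parabolic {b | b ∈ γ} := by
      rw [hg]
      exact mul_mem (memK hv') (inv_mem (memK hv))
    have h1 : u'⁻¹ * u = 1 := inter_triv cs hγred hγπ hdisj hgJ hgK
    have he1 : u = u' := (inv_mul_eq_one.mp h1).symm
    refine ⟨he1, ?_⟩
    apply mul_left_cancel (a := u)
    rw [heq, he1]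
  have hmono : ∀ {u v u' v' : W}, cs.bruhatLE u u' → cs.bruhatLE v v' →
      (∃ ρ, ρ.Sublist ω0 ∧ cs.IsReduced ρ ∧ cs.wordProd ρ = u') →
      (∃ g', g'.Sublist γ ∧ cs.IsReduced g' ∧ cs.wordProd g' = v') →
      cs.bruhatLE (u * v) (u' * v') := by
    rintro u v u' v' hu hv ⟨ρ, hρsub, hρred, hρπ⟩ ⟨g', hg'sub, hg'red, hg'π⟩
    have hred' : cs.IsReduced (ρ ++ g') := reduced_append cs hγred hγπ hdisj hρred
      (fun b hb => hω0J b (hρsub.subset hb)) hg'red (fun b hb => hg'sub.subset hb)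
    obtain ⟨l₁, hl₁, _, hl₁π⟩ := subword cs hu hρred hρπ
    obtain ⟨l₂, hl₂, _, hl₂π⟩ := subword cs hv hg'red hg'π
    exact ⟨ρ ++ g', hred', by rw [cs.wordProd_append, hρπ, hg'π],
      l₁ ++ l₂, hl₁.append hl₂, by rw [cs.wordProd_append, hl₁π, hl₂π]⟩
  let G : {u : W // cs.bruhatLE u w0J} × {v : W // cs.bruhatLE v c} →
      {z : W // cs.bruhatLE z (w0J * c)} := fun p =>
    ⟨(p.1 : W) * (p.2 : W),
      hmono p.1.2 p.2.2 ⟨ω0, List.Sublist.refl _, hω0red, hω0π⟩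
        ⟨γ, List.Sublist.refl _, hγred, hγπ⟩⟩
  have hGinj : Function.Injective G := by
    rintro ⟨⟨u, hu⟩, ⟨v, hv⟩⟩ ⟨⟨u', hu'⟩, ⟨v', hv'⟩⟩ h
    have heq : u * v = u' * v' := congrArg Subtype.val h
    obtain ⟨h1, h2⟩ := huniq u v u' v' hu hv hu' hv' heq
    simp only [Prod.mk.injEq, Subtype.mk.injEq]
    exact ⟨h1, h2⟩
  have hGsurj : Function.Surjective G := by
    rintro ⟨z, hz⟩
    obtain ⟨l, hlsub, _, hlπ⟩ := subword cs hz hωred hπω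
    obtain ⟨l₁, l₂, rfl, hs₁, hs₂⟩ := List.sublist_append_iff.mp hlsub
    refine ⟨(⟨cs.wordProd l₁, ⟨ω0, hω0red, hω0π, l₁, hs₁, rfl⟩⟩,
      ⟨cs.wordProd l₂, ⟨γ, hγred, hγπ, l₂, hs₂, rfl⟩⟩), ?_⟩
    apply Subtype.ext
    show cs.wordProd l₁ * cs.wordProd l₂ = z
    rw [← cs.wordProd_append, hlπ]
  let E := Equiv.ofBijective G ⟨hGinj, hGsurj⟩
  have hprop1 : ∀ z : {z : W // cs.bruhatLE z (w0J * c)},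
      (z : W) = ((E.symm z).1 : W) * ((E.symm z).2 : W) := by
    intro z
    have := E.apply_symm_apply z
    have hval := congrArg Subtype.val this
    exact hval.symm
  refine ⟨E.symm, hprop1, ?_, ?_⟩
  · intro z u v hu hv heq
    have hEz : E (⟨u, hu⟩, ⟨v, hv⟩) = z := Subtype.ext heq.symm
    have h2 : E.symm z = (⟨u, hu⟩, ⟨v, hv⟩) := by rw [← hEz, Equiv.symm_apply_apply]
    rw [h2]
    exact ⟨rfl, rfl⟩
  · intro z z'
    obtain ⟨ρ', hρ'sub, hρ'red, hρ'π⟩ := subword cs (E.symm z').1.2 hω0red hω0π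
    obtain ⟨γ'', hγ''sub, hγ''red, hγ''π⟩ := subword cs (E.symm z').2.2 hγred hγπ
    have hred' : cs.IsReduced (ρ' ++ γ'') := reduced_append cs hγred hγπ hdisj hρ'red
      (fun b hb => hω0J b (hρ'sub.subset hb)) hγ''red (fun b hb => hγ''sub.subset hb)
    have hπ' : cs.wordProd (ρ' ++ γ'') = (z' : W) := by
      rw [cs.wordProd_append, hρ'π, hγ''π, ← hprop1 z']
    constructor
    · intro h
      obtain ⟨l, hlsub, _, hlπ⟩ := subword cs h hred' hπ'
      obtain ⟨l₁, l₂, rfl, hs₁, hs₂⟩ := List.sublist_append_iff.mp hlsub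
      have hu₁ : cs.bruhatLE (cs.wordProd l₁) ((E.symm z').1 : W) :=
        ⟨ρ', hρ'red, hρ'π, l₁, hs₁, rfl⟩
      have hv₁ : cs.bruhatLE (cs.wordProd l₂) ((E.symm z').2 : W) :=
        ⟨γ'', hγ''red, hγ''π, l₂, hs₂, rfl⟩
      have hu₁J : cs.bruhatLE (cs.wordProd l₁) w0J := bruhat_trans cs hu₁ (E.symm z').1.2
      have hv₁c : cs.bruhatLE (cs.wordProd l₂) c := bruhat_trans cs hv₁ (E.symm z').2.2
      have heqz : cs.wordProd l₁ * cs.wordProd l₂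
          = ((E.symm z).1 : W) * ((E.symm z).2 : W) := by
        rw [← cs.wordProd_append, hlπ, ← hprop1 z]
      obtain ⟨e1, e2⟩ := huniq (cs.wordProd l₁) (cs.wordProd l₂)
        ((E.symm z).1 : W) ((E.symm z).2 : W) hu₁J hv₁c (E.symm z).1.2 (E.symm z).2.2 heqz
      constructor
      · rw [← e1]; exact hu₁
      · rw [← e2]; exact hv₁
    · rintro ⟨h1, h2⟩
      have := hmono h1 h2 ⟨ρ', hρ'sub, hρ'red, hρ'π⟩ ⟨γ'', hγ''sub, hγ''red, hγ''π⟩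
      rwa [← hprop1 z, ← hprop1 z'] at this
end

section
/- Let J ⊆ S be such that W_J is finite, and let c ∈ W be a Coxeter-type element with supp(c) ∩ J = ∅. Set w = w_{0,J}·c and assume ℓ(w) = ℓ(w_{0,J}) + ℓ(c). Then every z ∈ W with z ≤ w admits a factorization z = uv with u ≤ w_{0,J}, v ≤ c and ℓ(z) = ℓ(u) + ℓ(v); moreover, such a pair (u, v) is unique. -/
/-!
Statement 1. Let `J ⊆ S` with `W_J` finite and let `c` be a Coxeter-type element with
`supp(c) ∩ J = ∅`. Set `w = w_{0,J} * c` and assume `ℓ(w) = ℓ(w_{0,J}) + ℓ(c)`. Then every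
`z ≤ w` admits a unique factorization `z = u * v` with `u ≤ w_{0,J}`, `v ≤ c` and
`ℓ(z) = ℓ(u) + ℓ(v)`.
-/

variable {B W : Type*} [Group W] {M : CoxeterMatrix B}

section T2
open List
variable {B W : Type*} [Group W] {M : CoxeterMatrix B}
namespace CoxeterSystem
variable (cs : CoxeterSystem M W)
local prefix:100 "s" => cs.simple
local prefix:100 "π" => cs.wordProd
local prefix:100 "ℓ" => cs.length
local prefix:100 "ris" => cs.rightInvSeq

theorem rightInvSeq_cons' (i : B) (ω : List B) :
    ris (i :: ω) = ((π ω)⁻¹ * s i * π ω) :: ris ω := rfl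

open scoped Classical in
/-- The permutation of `W × Bool` attached to a simple reflection. -/
noncomputable def refPerm (i : B) : Equiv.Perm (W × Bool) :=
  Function.Involutive.toPerm
    (fun p => (s i * p.1 * s i, if p.1 = s i then !p.2 else p.2))
    (by
      intro p
      have h1 : s i * (s i * p.1 * s i) * s i = p.1 := by
        simp [mul_assoc, cs.simple_mul_simple_cancel_left]
      have h2 : (s i * p.1 * s i = s i) ↔ (p.1 = s i) := by
        constructor
        · intro h
          have := congrArg (fun x => s i * x * s i) h
          simpa [mul_assoc, cs.simple_mul_simple_cancel_left] using this
        · rintro h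
          rw [h]
          simp [cs.simple_mul_simple_cancel_left]
      dsimp only
      refine Prod.ext (by exact h1) ?_
      dsimp only
      rw [if_congr h2 rfl rfl]
      by_cases h : p.1 = s i
      · simp [h]
      · simp [h])

open scoped Classical in
theorem refPerm_apply (i : B) (p : W × Bool) :
    cs.refPerm i p = (s i * p.1 * s i, if p.1 = s i then !p.2 else p.2) := rfl

open scoped Classical in
/-- Main evaluation lemma for products of `refPerm`s. -/
theorem prod_map_refPerm_apply (ω : List B) (t : W) (b : Bool) :
    ((ω.map cs.refPerm).prod) (t, b) =
      (π ω * t * (π ω)⁻¹, if Odd ((ris ω).count t) then !b else b) := by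
  induction ω generalizing b with
  | nil => simp
  | cons i ω ih =>
      rw [map_cons, prod_cons, Equiv.Perm.mul_apply, ih, refPerm_apply]
      have hcond : (π ω * t * (π ω)⁻¹ = s i) ↔ (t = (π ω)⁻¹ * s i * π ω) := by
        constructor
        · intro h; rw [← h]; group
        · intro h; rw [h]; group
      have hfst : s i * (π ω * t * (π ω)⁻¹) * s i = π (i :: ω) * t * (π (i :: ω))⁻¹ := by
        rw [cs.wordProd_cons, mul_inv_rev, cs.inv_simple]
        group
      have hcount : ((ris (i :: ω)).count t)
          = (ris ω).count t + (if t = (π ω)⁻¹ * s i * π ω then 1 else 0) := by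
        rw [rightInvSeq_cons', List.count_cons]
        simp only [beq_iff_eq]
        rw [if_congr (eq_comm : ((π ω)⁻¹ * s i * π ω = t) ↔ _) rfl rfl]
      refine Prod.ext (by exact hfst) ?_
      show (if π ω * t * (π ω)⁻¹ = s i then !(if Odd ((ris ω).count t) then !b else b)
            else (if Odd ((ris ω).count t) then !b else b))
          = (if Odd ((ris (i :: ω)).count t) then !b else b)
      rw [hcount]
      by_cases h : t = (π ω)⁻¹ * s i * π ω
      · rw [if_pos (hcond.mpr h), if_pos h]
        by_cases ho : Odd ((ris ω).count t)
        · simp [Nat.odd_add_one, ho]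
        · simp [Nat.odd_add_one, ho]
      · rw [if_neg (fun hh => h (hcond.mp hh)), if_neg h, Nat.add_zero]

end CoxeterSystem

end T2
section T1B
open List
variable {B W : Type*} [Group W] {M : CoxeterMatrix B}
namespace CoxeterSystem
variable (cs : CoxeterSystem M W)
local prefix:100 "s" => cs.simple
local prefix:100 "π" => cs.wordProd
local prefix:100 "ris" => cs.rightInvSeq

theorem rightInvSeq_append' (a b : List B) :
    ris (a ++ b) = (ris a).map (fun r => (π b)⁻¹ * r * π b) ++ ris b := by
  induction a with
  | nil => simp
  | cons i a ih =>
      rw [cons_append, rightInvSeq_cons', rightInvSeq_cons', ih]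
      simp only [map_cons, cons_append, wordProd_append]
      congr 1
      group
end CoxeterSystem
end T1B
section T3
open List
variable {B W : Type*} [Group W] {M : CoxeterMatrix B}
namespace CoxeterSystem
variable (cs : CoxeterSystem M W)
local prefix:100 "s" => cs.simple
local prefix:100 "π" => cs.wordProd
local prefix:100 "ℓ" => cs.length
local prefix:100 "ris" => cs.rightInvSeq

/-- `m` copies of `[i, j]`. -/
def pairWord (i j : B) : ℕ → List B
  | 0 => []
  | m + 1 => i :: j :: pairWord i j m

theorem wordProd_pairWord (i j : B) (m : ℕ) : π (pairWord i j m) = (s i * s j) ^ m := by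
  induction m with
  | zero => simp [pairWord]
  | succ m ih =>
      rw [pairWord, wordProd_cons, wordProd_cons, ih, pow_succ']
      rw [mul_assoc]

theorem simple_mul_pow (i j : B) (m : ℕ) :
    s j * (s i * s j) ^ m = (s j * s i) ^ m * s j := by
  induction m with
  | zero => simp
  | succ m ih =>
      rw [pow_succ', ← mul_assoc, ← mul_assoc, mul_assoc (s j) (s i) (s j),
        ← mul_assoc]
      rw [mul_assoc ((s j) * (s i)) (s j) ((s i * s j) ^ m), ih, pow_succ']
      group

theorem pow_inv_simple (i j : B) (m : ℕ) :
    ((s i * s j : W) ^ m)⁻¹ = (s j * s i) ^ m := by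
  rw [← inv_pow, mul_inv_rev, inv_simple, inv_simple]

theorem rightInvSeq_pairWord (i j : B) (m : ℕ) :
    ris (pairWord i j m) =
      ((List.range (2 * m)).reverse).map (fun k => (s j * s i) ^ k * s j) := by
  induction m with
  | zero => simp [pairWord]
  | succ m ih =>
      have hr : (List.range (2 * (m + 1))).reverse
          = (2 * m + 1) :: (2 * m) :: (List.range (2 * m)).reverse := by
        have h2 : 2 * (m + 1) = (2 * m + 1) + 1 := by ring
        rw [h2, List.range_succ, List.range_succ]
        simp
      rw [pairWord, rightInvSeq_cons', rightInvSeq_cons', ih, hr, List.map_cons, List.map_cons]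
      have hB : (π (pairWord i j m))⁻¹ * s j * π (pairWord i j m)
          = (s j * s i) ^ (2 * m) * s j := by
        rw [wordProd_pairWord, pow_inv_simple, mul_assoc, simple_mul_pow, ← mul_assoc,
          ← pow_add, two_mul]
      have hA : (π (j :: pairWord i j m))⁻¹ * s i * π (j :: pairWord i j m)
          = (s j * s i) ^ (2 * m + 1) * s j := by
        rw [wordProd_cons, wordProd_pairWord, mul_inv_rev, inv_simple, pow_inv_simple,
          simple_mul_pow]
        have h3 : (s j * s i : W) ^ m * s j * s i * ((s j * s i) ^ m * s j)
            = ((s j * s i) ^ m * (s j * s i) * (s j * s i) ^ m) * s j := by group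
        rw [h3, ← pow_succ, ← pow_add]
        congr 2
        omega
      rw [hA, hB]

open scoped Classical in
theorem refPerm_liftable : CoxeterMatrix.IsLiftable M (fun i => cs.refPerm i) := by
  intro i j
  have key : ∀ m : ℕ, (cs.refPerm i * cs.refPerm j) ^ m
      = ((pairWord i j m).map cs.refPerm).prod := by
    intro m
    induction m with
    | zero => simp [pairWord]
    | succ m ih => rw [pow_succ', pairWord, List.map_cons, List.map_cons, List.prod_cons,
        List.prod_cons, ih, mul_assoc]
  show (cs.refPerm i * cs.refPerm j) ^ M i j = 1
  rw [key (M i j)]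
  apply Equiv.ext
  rintro ⟨t, b⟩
  rw [cs.prod_map_refPerm_apply]
  have h1 : π (pairWord i j (M i j)) = 1 := by
    rw [wordProd_pairWord, cs.simple_mul_simple_pow]
  have heven : ¬ Odd (((ris (pairWord i j (M i j)))).count t) := by
    rw [rightInvSeq_pairWord, Nat.not_odd_iff_even]
    have hcnt : ∀ (l : List ℕ), ((l.map (fun k => (s j * s i) ^ k * s j)).count t)
        = l.countP (fun k => decide ((s j * s i) ^ k * s j = t)) := by
      intro l
      rw [List.count, List.countP_map]
      rfl
    rw [hcnt, List.countP_reverse]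
    have hsplit : (2 : ℕ) * M i j = M i j + M i j := by ring
    rw [hsplit, List.range_add, List.countP_append, List.countP_map]
    have hcong : ((fun k => decide ((s j * s i : W) ^ k * s j = t)) ∘ (fun k => M i j + k))
        = (fun k => decide ((s j * s i : W) ^ k * s j = t)) := by
      funext k
      simp only [Function.comp_apply]
      congr 1
      rw [pow_add, cs.simple_mul_simple_pow', one_mul]
    rw [hcong]
    exact ⟨_, rfl⟩
  rw [h1, if_neg heven]
  simp

/-- The lifted homomorphism `W →* Perm (W × Bool)`. -/
noncomputable def refRep : W →* Equiv.Perm (W × Bool) :=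
  cs.lift ⟨fun i => cs.refPerm i, cs.refPerm_liftable⟩

theorem refRep_wordProd (ω : List B) : cs.refRep (π ω) = ((ω.map cs.refPerm)).prod := by
  induction ω with
  | nil => simp [wordProd_nil]
  | cons i ω ih =>
      rw [wordProd_cons, map_mul, ih, List.map_cons, List.prod_cons]
      congr 1
      exact cs.lift_apply_simple cs.refPerm_liftable i

open scoped Classical in
/-- Parity of the number of occurrences of `t` in the right inversion sequence only
depends on the product of the word. -/
theorem count_rightInvSeq_parity {ω ω' : List B} (h : π ω = π ω') (t : W) :
    (Odd ((ris ω).count t) ↔ Odd ((ris ω').count t)) := by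
  have h1 := cs.prod_map_refPerm_apply ω t false
  have h2 := cs.prod_map_refPerm_apply ω' t false
  rw [← cs.refRep_wordProd] at h1 h2
  rw [h] at h1
  rw [h1] at h2
  have := congrArg Prod.snd h2
  dsimp only at this
  by_cases ho : Odd ((ris ω).count t) <;> by_cases ho' : Odd ((ris ω').count t) <;>
    simp [ho, ho'] at this ⊢

end CoxeterSystem
end T3
section T4
open List
variable {B W : Type*} [Group W] {M : CoxeterMatrix B}
namespace CoxeterSystem
variable (cs : CoxeterSystem M W)
local prefix:100 "s" => cs.simple
local prefix:100 "π" => cs.wordProd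
local prefix:100 "ℓ" => cs.length
local prefix:100 "ris" => cs.rightInvSeq
local prefix:100 "lis" => cs.leftInvSeq

theorem leftInvSeq_cons' (i : B) (ω : List B) :
    lis (i :: ω) = s i :: (lis ω).map (MulAut.conj (s i)) := rfl

theorem conj_eq_iff (a t x : W) : (a = x * t * x⁻¹) ↔ (x⁻¹ * a * x = t) := by
  constructor
  · intro h; rw [h]; group
  · intro h; rw [← h]; group

open scoped Classical in
theorem count_leftInvSeq_eq_count_rightInvSeq (cs : CoxeterSystem M W) (ρ : List B) (i : B) :
    ((cs.leftInvSeq ρ).count (cs.wordProd ρ * cs.simple i * (cs.wordProd ρ)⁻¹))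
      = (cs.rightInvSeq ρ).count (cs.simple i) := by
  induction ρ with
  | nil => simp
  | cons r ρ ih =>
      rw [leftInvSeq_cons', rightInvSeq_cons', List.count_cons, List.count_cons]
      simp only [beq_iff_eq]
      have hmap : ((cs.leftInvSeq ρ).map (MulAut.conj (cs.simple r))).count
            (cs.wordProd (r :: ρ) * cs.simple i * (cs.wordProd (r :: ρ))⁻¹)
          = (cs.leftInvSeq ρ).count (cs.wordProd ρ * cs.simple i * (cs.wordProd ρ)⁻¹) := by
        have hx : cs.wordProd (r :: ρ) * cs.simple i * (cs.wordProd (r :: ρ))⁻¹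
            = (MulAut.conj (cs.simple r)) (cs.wordProd ρ * cs.simple i * (cs.wordProd ρ)⁻¹) := by
          rw [wordProd_cons, MulAut.conj_apply, mul_inv_rev]
          group
        rw [hx, List.count_map_of_injective _ _ (MulAut.conj (cs.simple r)).injective]
      rw [hmap, ih]
      congr 1
      have hx : (cs.wordProd (r :: ρ))⁻¹ * cs.simple r * cs.wordProd (r :: ρ)
          = (cs.wordProd ρ)⁻¹ * cs.simple r * cs.wordProd ρ := by
        rw [wordProd_cons, mul_inv_rev]
        group
      have hiff : (cs.simple r = cs.wordProd (r :: ρ) * cs.simple i * (cs.wordProd (r :: ρ))⁻¹)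
          ↔ ((cs.wordProd ρ)⁻¹ * cs.simple r * cs.wordProd ρ = cs.simple i) := by
        rw [conj_eq_iff, hx]
      by_cases hc : (cs.wordProd ρ)⁻¹ * cs.simple r * cs.wordProd ρ = cs.simple i
      · rw [if_pos (hiff.mpr hc), if_pos hc]
      · rw [if_neg (fun hh => hc (hiff.mp hh)), if_neg hc]

open scoped Classical in
theorem exists_word_odd_count {t : W} (ht : cs.IsReflection t) :
    ∃ τ : List B, π τ = t ∧ Odd ((ris τ).count t) := by
  obtain ⟨g, i, rfl⟩ := ht
  obtain ⟨ρ, hρ⟩ := cs.wordProd_surjective g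
  refine ⟨ρ ++ (i :: ρ.reverse), ?_, ?_⟩
  · rw [wordProd_append, wordProd_cons, wordProd_reverse, hρ]
    group
  · rw [cs.rightInvSeq_append', List.count_append]
    have hπ : π (i :: ρ.reverse) = s i * g⁻¹ := by
      rw [wordProd_cons, wordProd_reverse, hρ]
    have hf : (g * s i * g⁻¹ : W) = (fun r => (π (i :: ρ.reverse))⁻¹ * r * π (i :: ρ.reverse)) (s i) := by
      dsimp only
      rw [hπ, mul_inv_rev, inv_inv, inv_simple, ← mul_assoc, cs.simple_mul_simple_cancel_right]
    have hinj : Function.Injective (fun r : W => (π (i :: ρ.reverse))⁻¹ * r * π (i :: ρ.reverse)) := by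
      intro a b hab
      dsimp only at hab
      exact mul_left_cancel (mul_right_cancel hab)
    have h1 : ((ris ρ).map (fun r => (π (i :: ρ.reverse))⁻¹ * r * π (i :: ρ.reverse))).count
        (g * s i * g⁻¹) = (ris ρ).count (s i) := by
      rw [hf, List.count_map_of_injective _ _ hinj]
    rw [h1, rightInvSeq_cons', List.count_cons]
    simp only [beq_iff_eq]
    have hhead : (π ρ.reverse)⁻¹ * s i * π ρ.reverse = g * s i * g⁻¹ := by
      rw [wordProd_reverse, hρ, inv_inv]
    rw [if_pos hhead, cs.rightInvSeq_reverse, List.count_reverse]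
    have h2 : (lis ρ).count (g * s i * g⁻¹) = (ris ρ).count (s i) := by
      rw [← hρ]
      exact count_leftInvSeq_eq_count_rightInvSeq cs ρ i
    rw [h2]
    exact ⟨(ris ρ).count (s i), by ring⟩

open scoped Classical in
/-- Strong exchange property. -/
theorem strong_exchange_right {ω : List B} {t : W} (hred : cs.IsReduced ω)
    (ht : cs.IsReflection t) (hlt : ℓ (π ω * t) < ℓ (π ω)) :
    ∃ j, j < ω.length ∧ π ω * t = π (ω.eraseIdx j) := by
  have hmem : t ∈ ris ω := by
    by_contra hmem
    obtain ⟨σ, hσred, hσ⟩ := cs.exists_reduced_word' (π ω * t)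
    obtain ⟨τ, hτ, hτodd⟩ := cs.exists_word_odd_count ht
    have hprod : π (σ ++ τ) = π ω := by
      rw [wordProd_append, ← hσ, hτ, mul_assoc, ht.mul_self, mul_one]
    have hpar := cs.count_rightInvSeq_parity hprod t
    rw [cs.rightInvSeq_append', List.count_append] at hpar
    have hmap : ((ris σ).map (fun r => (π τ)⁻¹ * r * π τ)).count t = (ris σ).count t := by
      have hf : t = (fun r : W => (π τ)⁻¹ * r * π τ) t := by
        dsimp only
        rw [hτ]
        group
      have hinj : Function.Injective (fun r : W => (π τ)⁻¹ * r * π τ) := by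
        intro a b hab
        dsimp only at hab
        exact mul_left_cancel (mul_right_cancel hab)
      nth_rw 1 [hf]
      rw [List.count_map_of_injective _ _ hinj]
    rw [hmap] at hpar
    have hzero : (ris ω).count t = 0 := List.count_eq_zero.mpr hmem
    rw [hzero] at hpar
    have hnotodd : ¬ Odd ((ris σ).count t + (ris τ).count t) := by
      rw [hpar]
      simp
    have hσoddT : Odd ((ris σ).count t) := by
      rcases Nat.even_or_odd ((ris σ).count t) with he | ho
      · exact absurd (he.add_odd hτodd) hnotodd
      · exact ho
    have hpos : t ∈ ris σ := by
      rw [← List.count_pos_iff]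
      rcases hσoddT with ⟨k, hk⟩
      omega
    have hinv := cs.isRightInversion_of_mem_rightInvSeq hσred hpos
    rw [← hσ] at hinv
    have := hinv.2
    rw [mul_assoc, ht.mul_self, mul_one] at this
    omega
  obtain ⟨j, hj, hget⟩ := List.mem_iff_getElem.mp hmem
  rw [cs.length_rightInvSeq] at hj
  refine ⟨j, hj, ?_⟩
  rw [← cs.wordProd_mul_getD_rightInvSeq ω j]
  congr 1
  rw [List.getD_eq_getElem _ 1 (by rwa [cs.length_rightInvSeq])]
  exact hget.symm

end CoxeterSystem
end T4
section T5
open List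
variable {B W : Type*} [Group W] {M : CoxeterMatrix B}
namespace CoxeterSystem
variable (cs : CoxeterSystem M W)
local prefix:100 "s" => cs.simple
local prefix:100 "π" => cs.wordProd
local prefix:100 "ℓ" => cs.length

/-- Deletion property: every word has a reduced sublist with the same product. -/
theorem exists_reduced_sublist (ω : List B) :
    ∃ l, l.Sublist ω ∧ cs.IsReduced l ∧ π l = π ω := by
  suffices H : ∀ (n : ℕ) (ω : List B), ω.length = n → ∃ l, l.Sublist ω ∧ cs.IsReduced l ∧ π l = π ω by
    exact H ω.length ω rfl
  intro n
  induction n using Nat.strong_induction_on with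
  | _ n ih =>
  intro ω hn
  by_cases hred : cs.IsReduced ω
  · exact ⟨ω, List.Sublist.refl ω, hred, rfl⟩
  · have hlen0 : ω.length ≠ 0 := by
      intro h0
      rw [List.length_eq_zero_iff] at h0
      apply hred
      rw [h0]
      simp [IsReduced]
    have hwit : ¬ cs.IsReduced (ω.take (ω.length - 1 + 1)) := by
      have : ω.length - 1 + 1 = ω.length := by omega
      rw [this, List.take_length]
      exact hred
    have hex : ∃ j, ¬ cs.IsReduced (ω.take (j + 1)) := ⟨ω.length - 1, hwit⟩
    classical
    set j := Nat.find hex with hjdef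
    have hj : ¬ cs.IsReduced (ω.take (j + 1)) := Nat.find_spec hex
    have hmin : ∀ k, k < j → cs.IsReduced (ω.take (k + 1)) := by
      intro k hk
      by_contra hcon
      have h2 : j ≤ k := Nat.find_le hcon
      omega
    have hjlt : j < ω.length := by
      have h2 : j ≤ ω.length - 1 := Nat.find_le hwit
      omega
    have hκred : cs.IsReduced (ω.take j) := by
      rcases Nat.eq_zero_or_pos j with h0 | hpos
      · rw [h0]
        simp [IsReduced]
      · have := hmin (j - 1) (by omega)
        rwa [(by omega : j - 1 + 1 = j)] at this
    have htake : ω.take (j + 1) = ω.take j ++ [ω[j]] := by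
      rw [List.take_succ, List.getElem?_eq_getElem hjlt]
      rfl
    have hκlen : (ω.take j).length = j := by
      rw [List.length_take]
      omega
    have hκprodlen : ℓ (π (ω.take j)) = j := by
      rw [hκred, hκlen]
    have hdesc : ℓ (π (ω.take j) * s (ω[j])) < ℓ (π (ω.take j)) := by
      have hne : ℓ (π (ω.take (j + 1))) ≠ (ω.take (j+1)).length := hj
      rw [htake] at hne
      rw [wordProd_append, wordProd_singleton] at hne
      rw [List.length_append, hκlen] at hne
      simp only [List.length_singleton] at hne
      rcases cs.length_mul_simple (π (ω.take j)) (ω[j]) with h | h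
      · rw [hκprodlen] at h
        exact absurd h hne
      · omega
    obtain ⟨k, hk, heq⟩ := cs.strong_exchange_right hκred (cs.isReflection_simple (ω[j])) hdesc
    set ω'' := (ω.take j).eraseIdx k ++ ω.drop (j + 1) with hω''
    have hdecomp : (ω.take j ++ [ω[j]]) ++ ω.drop (j + 1) = ω := by
      rw [← htake, List.take_append_drop]
    have hsub : ω''.Sublist ω := by
      rw [← hdecomp]
      refine List.Sublist.append ?_ (List.Sublist.refl _)
      exact (List.eraseIdx_sublist _ k).trans (List.sublist_append_left _ _)
    have hprod : π ω'' = π ω := by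
      rw [hω'', wordProd_append, ← heq]
      conv_rhs => rw [← hdecomp]
      rw [wordProd_append, wordProd_append, wordProd_singleton]
    have hlt : ω''.length < ω.length := by
      rw [hω'', List.length_append]
      have hkj : k < j := by rwa [hκlen] at hk
      have h1 : ((ω.take j).eraseIdx k).length + 1 = (ω.take j).length :=
        List.length_eraseIdx_add_one (by rw [hκlen]; exact hkj)
      have h2 : (ω.drop (j + 1)).length = ω.length - (j + 1) := List.length_drop
      omega
    obtain ⟨l, hl, hlred, hlprod⟩ := ih ω''.length (by omega) ω'' rfl
    exact ⟨l, hl.trans hsub, hlred, hlprod.trans hprod⟩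

/-- A single step of the Bruhat order: multiply by a reflection, increasing length. -/
def brStep (x y : W) : Prop := ∃ t, cs.IsReflection t ∧ y = x * t ∧ ℓ x < ℓ y

/-- The Bruhat order defined via reflections. -/
def br : W → W → Prop := Relation.ReflTransGen cs.brStep

theorem br_simple_mul {x y : W} (h : cs.br x y) (i : B) :
    cs.br (s i * x) y ∨ cs.br (s i * x) (s i * y) := by
  induction h using Relation.ReflTransGen.head_induction_on with
  | refl => exact Or.inr Relation.ReflTransGen.refl
  | @head a c hstep hrest ih =>
      obtain ⟨t, ht, hc, hlen⟩ := hstep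
      have hne : ℓ (s i * a * t) ≠ ℓ (s i * a) := ht.length_mul_left_ne (s i * a)
      rcases Nat.lt_or_ge (ℓ (s i * a)) (ℓ (s i * a * t)) with hlt | hge
      · -- genuine step
        have hstep' : cs.brStep (s i * a) (s i * c) := by
          refine ⟨t, ht, ?_, ?_⟩
          · rw [hc, mul_assoc]
          · rw [hc, ← mul_assoc]
            exact hlt
        rcases ih with ih | ih
        · exact Or.inl (Relation.ReflTransGen.head hstep' ih)
        · exact Or.inr (Relation.ReflTransGen.head hstep' ih)
      · -- degenerate: s i * a = c
        have hgt : ℓ (s i * a * t) < ℓ (s i * a) := by omega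
        have hd1 : ℓ (s i * a) = ℓ a + 1 ∨ ℓ (s i * a) + 1 = ℓ a := cs.length_simple_mul a i
        have hd2 : ℓ (s i * (a * t)) = ℓ (a * t) + 1 ∨ ℓ (s i * (a * t)) + 1 = ℓ (a * t) :=
          cs.length_simple_mul (a * t) i
        rw [← mul_assoc] at hd2
        rw [hc] at hlen
        have hsalen : ℓ (s i * a) = ℓ a + 1 := by omega
        have hatlen : ℓ (a * t) = ℓ a + 1 := by omega
        have hsat : ℓ (s i * a * t) = ℓ a := by omega
        -- now show s i * a = a * t
        obtain ⟨ν, hνred, hνprod⟩ := cs.exists_reduced_word' (s i * (a * t))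
        have hνlen : ν.length = ℓ a := by
          have h3 : ℓ (π ν) = ν.length := hνred
          rw [← hνprod, ← mul_assoc] at h3
          omega
        have hiνred : cs.IsReduced (i :: ν) := by
          show ℓ (π (i :: ν)) = (i :: ν).length
          rw [wordProd_cons, ← hνprod, cs.simple_mul_simple_cancel_left, List.length_cons,
            hνlen, hatlen]
        have hiνprod : π (i :: ν) = a * t := by
          rw [wordProd_cons, ← hνprod, cs.simple_mul_simple_cancel_left]
        have hdesc : ℓ (π (i :: ν) * t) < ℓ (π (i :: ν)) := by
          rw [hiνprod, mul_assoc, ht.mul_self, mul_one, hatlen]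
          omega
        obtain ⟨k, hk, heq⟩ := cs.strong_exchange_right hiνred ht hdesc
        rw [hiνprod, mul_assoc, ht.mul_self, mul_one] at heq
        match k, hk with
        | 0, _ =>
            rw [List.eraseIdx_cons_zero, ← hνprod] at heq
            have hfin : s i * a = a * t := by
              conv_lhs => rw [heq]
              rw [cs.simple_mul_simple_cancel_left]
            rw [← hc] at hfin
            rw [hfin]
            exact Or.inl hrest
        | (k' + 1), hk =>
            exfalso
            rw [List.eraseIdx_cons_succ, wordProd_cons] at heq
            have : ℓ (s i * a) ≤ (ν.eraseIdx k').length := by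
              have : s i * a = π (ν.eraseIdx k') := by
                rw [heq, cs.simple_mul_simple_cancel_left]
              rw [this]
              exact cs.length_wordProd_le _
            have hklt : k' < ν.length := by
              simp only [List.length_cons] at hk
              omega
            have := List.length_eraseIdx_add_one hklt
            omega

theorem isReduced_tail {i : B} {ρ : List B} (h : cs.IsReduced (i :: ρ)) : cs.IsReduced ρ := by
  have := h.drop 1
  simpa using this

theorem brStep_cons {i : B} {ρ : List B} (h : cs.IsReduced (i :: ρ)) :
    cs.brStep (π ρ) (π (i :: ρ)) := by
  refine ⟨(π ρ)⁻¹ * s i * π ρ, ?_, ?_, ?_⟩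
  · have := (cs.isReflection_simple i).conj (π ρ)⁻¹
    rwa [inv_inv] at this
  · rw [wordProd_cons]
    group
  · rw [h, cs.isReduced_tail h]
    simp

theorem br_of_sublist : ∀ {ω l : List B}, cs.IsReduced ω → l.Sublist ω → cs.br (π l) (π ω) := by
  intro ω
  induction ω with
  | nil =>
      intro l _ hsub
      rw [List.sublist_nil.mp hsub]
      exact Relation.ReflTransGen.refl
  | cons i ρ ih =>
      intro l hred hsub
      cases hsub with
      | cons _ h =>
          exact Relation.ReflTransGen.tail (ih (cs.isReduced_tail hred) h) (cs.brStep_cons hred)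
      | cons_cons _ h =>
          rename_i l'
          have ihbr := ih (cs.isReduced_tail hred) h
          rcases cs.br_simple_mul ihbr i with hbr | hbr
          · rw [← wordProd_cons] at hbr
            exact Relation.ReflTransGen.tail hbr (cs.brStep_cons hred)
          · rw [← wordProd_cons, ← wordProd_cons] at hbr
            exact hbr

theorem exists_reduced_sublist_of_br {z w : W} (h : cs.br z w) :
    ∀ ω : List B, cs.IsReduced ω → π ω = w →
      ∃ l, l.Sublist ω ∧ cs.IsReduced l ∧ π l = z := by
  induction h using Relation.ReflTransGen.head_induction_on with
  | refl =>
      intro ω hred hπ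
      exact ⟨ω, List.Sublist.refl _, hred, hπ⟩
  | @head a c hstep hrest ih =>
      intro ω hred hπ
      obtain ⟨m, hm, hmred, hmprod⟩ := ih ω hred hπ
      obtain ⟨t, ht, hc, hlen⟩ := hstep
      have hdesc : ℓ (π m * t) < ℓ (π m) := by
        rw [hmprod, hc, mul_assoc, ht.mul_self, mul_one, ← hc]
        exact hlen
      obtain ⟨k, hk, heq⟩ := cs.strong_exchange_right hmred ht hdesc
      have ha : π (m.eraseIdx k) = a := by
        rw [← heq, hmprod, hc, mul_assoc, ht.mul_self, mul_one]
      obtain ⟨l, hl, hlred, hlprod⟩ := cs.exists_reduced_sublist (m.eraseIdx k)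
      exact ⟨l, (hl.trans (List.eraseIdx_sublist _ _)).trans hm, hlred, hlprod.trans ha⟩

end CoxeterSystem
end T5
section T6
open List
variable {B W : Type*} [Group W] {M : CoxeterMatrix B}
namespace CoxeterSystem
variable (cs : CoxeterSystem M W)
local prefix:100 "s" => cs.simple
local prefix:100 "π" => cs.wordProd
local prefix:100 "ℓ" => cs.length

/-- The subword property: if `z ≤ w` then `z` is a reduced subword of *every* reduced word
for `w`. -/
theorem bruhatLE_transfer {z w : W} (h : cs.bruhatLE z w) {ω : List B}
    (hred : cs.IsReduced ω) (hπ : π ω = w) :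
    ∃ l, l.Sublist ω ∧ cs.IsReduced l ∧ π l = z := by
  obtain ⟨ω₀, h₀red, h₀π, l₀, hsub₀, hprod₀⟩ := h
  have hbr := cs.br_of_sublist h₀red hsub₀
  rw [hprod₀, h₀π] at hbr
  exact cs.exists_reduced_sublist_of_br hbr ω hred hπ

theorem exists_word_of_mem_parabolic {J : Set B} {g : W} (h : g ∈ cs.parabolic J) :
    ∃ ν : List B, (∀ i ∈ ν, i ∈ J) ∧ π ν = g := by
  induction h using Subgroup.closure_induction with
  | mem x hx =>
      obtain ⟨i, hi, rfl⟩ := hx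
      exact ⟨[i], by simpa using hi, cs.wordProd_singleton i⟩
  | one => exact ⟨[], by simp, cs.wordProd_nil⟩
  | mul x y _ _ hx hy =>
      obtain ⟨ν₁, h₁, hp₁⟩ := hx
      obtain ⟨ν₂, h₂, hp₂⟩ := hy
      refine ⟨ν₁ ++ ν₂, ?_, by rw [wordProd_append, hp₁, hp₂]⟩
      intro i hi
      rcases List.mem_append.mp hi with h | h
      · exact h₁ i h
      · exact h₂ i h
  | inv x _ hx =>
      obtain ⟨ν, h₁, hp⟩ := hx
      refine ⟨ν.reverse, ?_, by rw [wordProd_reverse, hp]⟩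
      intro i hi
      exact h₁ i (List.mem_reverse.mp hi)

end CoxeterSystem
end T6

theorem unique_factorization_below_horospherical_element'
    (cs : CoxeterSystem M W) (J : Set B)
    (w0J : W) (hw0J : w0J ∈ cs.parabolic J)
    (c : W) (hc : ∃ l : List B, l.Nodup ∧ cs.wordProd l = c)
    (hdisj : cs.support c ∩ J = ∅)
    (w : W) (hw : w = w0J * c)
    (hlen : cs.length w = cs.length w0J + cs.length c) :
    ∀ z : W, cs.bruhatLE z w →
      ∃! p : W × W, cs.bruhatLE p.1 w0J ∧ cs.bruhatLE p.2 c ∧ z = p.1 * p.2 ∧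
        cs.length z = cs.length p.1 + cs.length p.2 := by
  open CoxeterSystem List in
  intro z hz
  classical
  obtain ⟨ν, hνJ, hνprod⟩ := cs.exists_word_of_mem_parabolic hw0J
  obtain ⟨ω0, hω0sub, hω0red, hω0prod⟩ := cs.exists_reduced_sublist ν
  rw [hνprod] at hω0prod
  have hω0J : ∀ i ∈ ω0, i ∈ J := fun i hi => hνJ i (hω0sub.subset hi)
  obtain ⟨lc, _, hlcprod⟩ := hc
  obtain ⟨mc, hmcsub, hmcred, hmcprod⟩ := cs.exists_reduced_sublist lc
  rw [hlcprod] at hmcprod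
  have hΩprod : cs.wordProd (ω0 ++ mc) = w := by
    rw [cs.wordProd_append, hω0prod, hmcprod, hw]
  have hlenω0 : ω0.length = cs.length w0J := by
    have : cs.length (cs.wordProd ω0) = ω0.length := hω0red
    rw [hω0prod] at this
    omega
  have hlenmc : mc.length = cs.length c := by
    have : cs.length (cs.wordProd mc) = mc.length := hmcred
    rw [hmcprod] at this
    omega
  have hΩred : cs.IsReduced (ω0 ++ mc) := by
    show cs.length (cs.wordProd (ω0 ++ mc)) = (ω0 ++ mc).length
    rw [hΩprod, hlen, List.length_append, hlenω0, hlenmc]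
  obtain ⟨l, hlsub, hlred, hlprod⟩ := cs.bruhatLE_transfer hz hΩred hΩprod
  obtain ⟨l₁, l₂, rfl, hl₁, hl₂⟩ := List.sublist_append_iff.mp hlsub
  have hzuv : z = cs.wordProd l₁ * cs.wordProd l₂ := by
    rw [← hlprod, cs.wordProd_append]
  have hlz : cs.length z = l₁.length + l₂.length := by
    have : cs.length (cs.wordProd (l₁ ++ l₂)) = (l₁ ++ l₂).length := hlred
    rw [hlprod, List.length_append] at this
    exact this
  have hu_le : cs.length (cs.wordProd l₁) ≤ l₁.length := cs.length_wordProd_le l₁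
  have hv_le : cs.length (cs.wordProd l₂) ≤ l₂.length := cs.length_wordProd_le l₂
  have hmul_le : cs.length (cs.wordProd l₁ * cs.wordProd l₂) ≤
      cs.length (cs.wordProd l₁) + cs.length (cs.wordProd l₂) := cs.length_mul_le _ _
  have hzlen : cs.length z = cs.length (cs.wordProd l₁) + cs.length (cs.wordProd l₂) := by
    rw [hzuv] at hlz ⊢
    omega
  refine ⟨(cs.wordProd l₁, cs.wordProd l₂),
    ⟨⟨ω0, hω0red, hω0prod, l₁, hl₁, rfl⟩, ⟨mc, hmcred, hmcprod, l₂, hl₂, rfl⟩, hzuv, hzlen⟩, ?_⟩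
  rintro ⟨u', v'⟩ ⟨hu', hv', hzuv', -⟩
  -- uniqueness
  obtain ⟨k₁, hk₁sub, hk₁red, hk₁prod⟩ := cs.bruhatLE_transfer hu' hω0red hω0prod
  obtain ⟨m₂, hm₂sub, hm₂red, hm₂prod⟩ := cs.bruhatLE_transfer hv' hmcred hmcprod
  have huv' : u' * v' = cs.wordProd l₁ * cs.wordProd l₂ := by
    rw [← hzuv', hzuv]
  have hg : u'⁻¹ * cs.wordProd l₁ = v' * (cs.wordProd l₂)⁻¹ := by
    calc u'⁻¹ * cs.wordProd l₁
        = u'⁻¹ * (cs.wordProd l₁ * cs.wordProd l₂) * (cs.wordProd l₂)⁻¹ := by group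
      _ = u'⁻¹ * (u' * v') * (cs.wordProd l₂)⁻¹ := by rw [huv']
      _ = v' * (cs.wordProd l₂)⁻¹ := by group
  obtain ⟨α, hαsub, hαred, hαprod⟩ := cs.exists_reduced_sublist (k₁.reverse ++ l₁)
  have hαprod' : cs.wordProd α = u'⁻¹ * cs.wordProd l₁ := by
    rw [hαprod, cs.wordProd_append, cs.wordProd_reverse, hk₁prod]
  obtain ⟨β, hβsub, hβred, hβprod⟩ := cs.exists_reduced_sublist (m₂ ++ l₂.reverse)
  have hβprod' : cs.wordProd β = v' * (cs.wordProd l₂)⁻¹ := by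
    rw [hβprod, cs.wordProd_append, cs.wordProd_reverse, hm₂prod]
  have hαJ : ∀ i ∈ α, i ∈ J := by
    intro i hi
    rcases List.mem_append.mp (hαsub.subset hi) with h | h
    · exact hω0J i (hk₁sub.subset (List.mem_reverse.mp h))
    · exact hω0J i (hl₁.subset h)
  have hβmc : ∀ i ∈ β, i ∈ mc := by
    intro i hi
    rcases List.mem_append.mp (hβsub.subset hi) with h | h
    · exact hm₂sub.subset h
    · exact hl₂.subset (List.mem_reverse.mp h)
  match hα : α, hαprod' with
  | [], hαprod' =>
      have h1 : u' = cs.wordProd l₁ := by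
        have : (1 : W) = u'⁻¹ * cs.wordProd l₁ := by
          rw [← hαprod']
          exact (cs.wordProd_nil).symm
        exact (inv_mul_eq_one.mp this.symm)
      have h2 : v' = cs.wordProd l₂ := by
        have : v' * (cs.wordProd l₂)⁻¹ = 1 := by
          rw [← hg, ← hαprod']
          exact cs.wordProd_nil
        exact mul_inv_eq_one.mp this
      simp [Prod.ext_iff]
      exact ⟨h1, h2⟩
  | i₀ :: αt, hαprod' =>
      exfalso
      have hαred' : cs.IsReduced (i₀ :: αt) := hα ▸ hαred
      have hbru : cs.bruhatLE (cs.simple i₀) (cs.wordProd (i₀ :: αt)) :=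
        ⟨i₀ :: αt, hαred', rfl, [i₀], List.Sublist.cons₂ i₀ (List.nil_sublist αt),
          cs.wordProd_singleton i₀⟩
      have hβπ : cs.wordProd β = cs.wordProd (i₀ :: αt) := by
        rw [hβprod', ← hg, ← hαprod']
      obtain ⟨lβ, hlβsub, hlβred, hlβprod⟩ := cs.bruhatLE_transfer hbru hβred hβπ
      have hlβlen : lβ.length = 1 := by
        have : cs.length (cs.wordProd lβ) = lβ.length := hlβred
        rw [hlβprod, cs.length_simple] at this
        omega
      obtain ⟨j, rfl⟩ := List.length_eq_one_iff.mp hlβlen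
      have hsj : cs.simple j = cs.simple i₀ := by
        rw [← cs.wordProd_singleton j, hlβprod]
      have hjmc : j ∈ mc := hβmc j (hlβsub.subset (List.mem_singleton_self j))
      have hi₀J : i₀ ∈ J := hαJ i₀ (List.mem_cons_self (a := i₀) (l := αt))
      set mc' := mc.map (fun k => if k = j then i₀ else k) with hmc'
      have hmc'prod : cs.wordProd mc' = c := by
        rw [← hmcprod]
        unfold wordProd
        rw [hmc', List.map_map]
        congr 1
        apply List.map_congr_left
        intro x hx
        by_cases hxj : x = j
        · simp [hxj, hsj]
        · simp [hxj]
      have hmc'red : cs.IsReduced mc' := by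
        show cs.length (cs.wordProd mc') = mc'.length
        rw [hmc'prod, hmc', List.length_map, hlenmc]
      have hi₀mem : i₀ ∈ mc' := List.mem_map.mpr ⟨j, hjmc, by simp⟩
      have hsupp : i₀ ∈ cs.support c := ⟨mc', hmc'red, hmc'prod, hi₀mem⟩
      have : i₀ ∈ cs.support c ∩ J := ⟨hsupp, hi₀J⟩
      rw [hdisj] at this
      exact this

theorem unique_factorization_below_horospherical_element
    (cs : CoxeterSystem M W) (J : Set B)
    (hfin : Finite (cs.parabolic J))
    (w0J : W) (hw0J : w0J ∈ cs.parabolic J)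
    (hw0Jmax : ∀ u ∈ cs.parabolic J, cs.length u ≤ cs.length w0J)
    (c : W) (hc : ∃ l : List B, l.Nodup ∧ cs.wordProd l = c)
    (hdisj : cs.support c ∩ J = ∅)
    (w : W) (hw : w = w0J * c)
    (hlen : cs.length w = cs.length w0J + cs.length c) :
    ∀ z : W, cs.bruhatLE z w →
      ∃! p : W × W, cs.bruhatLE p.1 w0J ∧ cs.bruhatLE p.2 c ∧ z = p.1 * p.2 ∧
        cs.length z = cs.length p.1 + cs.length p.2 := by
  intro z hz
  exact unique_factorization_below_horospherical_element' cs J w0J hw0J c hc hdisj w hw hlen z hz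
end
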